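/- Let R_ℤ = ⊕_{i≥j≥0} R_{ij} be the Morita ℤ-algebra associated to Morita equivalent rings {R_n} with progenerator bimodules {P_n}, where R_0 is noetherian. Then the functor M ↦ π(⊕_{n∈ℕ} R_{n0} ⊗_{R_0} M) induces an equivalence of categories between the category of finitely generated left R_0-modules and the quotient category R_ℤ-qgr of noetherian graded left R_ℤ-modules modulo the subcategory of bounded (finite length in each degree and zero in almost all degrees) modules. -/

import Mathlib

noncomputable section

variable (R : ℕ → Type) [∀ n, Ring (R n)]
variable (P : ℕ → Type) [∀ n, AddCommGroup (P n)]
variable (lP : ∀ n, R (n + 1) → P n → P n) (rP : ∀ n, P n → R n → P n)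

/-- A graded left module over the Morita ℤ-algebra `R_ℤ = ⊕_{i≥j≥0} R_{ij}`, encoded
by its components: a family of `R_n`-modules `M_n` together with balanced bilinear
actions `P_n × M_n → M_{n+1}` (the tensor strings `R_{ij}` act by iteration). -/
structure GrMod : Type 1 where
  M : ℕ → Type
  [acg : ∀ n, AddCommGroup (M n)]
  [mod : ∀ n, Module (R n) (M n)]
  act : ∀ n, P n → M n → M (n + 1)
  act_addl : ∀ n (p p' : P n) m, act n (p + p') m = act n p m + act n p' m
  act_addr : ∀ n (p : P n) (m m' : M n), act n p (m + m') = act n p m + act n p m'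
  act_l : ∀ n (r : R (n + 1)) (p : P n) m, act n (lP n r p) m = r • act n p m
  act_r : ∀ n (p : P n) (r : R n) m, act n (rP n p r) m = act n p (r • m)

attribute [instance] GrMod.acg GrMod.mod

/-- A morphism of graded `R_ℤ`-modules: a family of degree-zero `R_n`-linear maps
commuting with the `P_n`-actions. -/
structure GrHom (X Y : GrMod R P lP rP) where
  f : ∀ n, X.M n →ₗ[R n] Y.M n
  compat : ∀ (n : ℕ) (p : P n) (m : X.M n),
    f (n + 1) (X.act n p m) = Y.act n p (f n m)

/-- A graded `R_ℤ`-module is finitely generated if finitely many homogeneous elements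
generate it (no proper graded submodule contains them all). -/
def GrMod.IsFG (X : GrMod R P lP rP) : Prop :=
  ∃ gens : Finset (Σ n : ℕ, X.M n),
    ∀ N : ∀ n, Submodule (R n) (X.M n),
      (∀ (n : ℕ) (p : P n) (m : X.M n), m ∈ N n → X.act n p m ∈ N (n + 1)) →
      (∀ g ∈ gens, g.2 ∈ N g.1) → ∀ (n : ℕ) (x : X.M n), x ∈ N n

/-! ### Auxiliary development -/

/-- Bundle of the Morita-context data and axioms. -/
structure MCtx : Type 1 where
  Q : ℕ → Type
  acgQ : ∀ n, AddCommGroup (Q n)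
  lQ : ∀ n, R n → Q n → Q n
  rQ : ∀ n, Q n → R (n + 1) → Q n
  tau : ∀ n, P n → Q n → R (n + 1)
  sig : ∀ n, Q n → P n → R n
  lP_addl : ∀ n (r s : R (n + 1)) p, lP n (r + s) p = lP n r p + lP n s p
  lP_addr : ∀ n (r : R (n + 1)) (p q : P n), lP n r (p + q) = lP n r p + lP n r q
  lP_one : ∀ n p, lP n 1 p = p
  lP_mul : ∀ n (r s : R (n + 1)) p, lP n (r * s) p = lP n r (lP n s p)
  rP_addl : ∀ n (p q : P n) r, rP n (p + q) r = rP n p r + rP n q r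
  rP_addr : ∀ n (p : P n) (r s : R n), rP n p (r + s) = rP n p r + rP n p s
  rP_one : ∀ n p, rP n p 1 = p
  rP_mul : ∀ n (p : P n) (r s : R n), rP n p (r * s) = rP n (rP n p r) s
  lrP : ∀ n (r : R (n + 1)) (p : P n) (s : R n),
    rP n (lP n r p) s = lP n r (rP n p s)
  lQ_addl : ∀ n (r s : R n) q, lQ n (r + s) q = lQ n r q + lQ n s q
  lQ_addr : ∀ n (r : R n) (q q' : Q n), lQ n r (q + q') = lQ n r q + lQ n r q'
  lQ_one : ∀ n q, lQ n 1 q = q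
  lQ_mul : ∀ n (r s : R n) q, lQ n (r * s) q = lQ n r (lQ n s q)
  rQ_addl : ∀ n (q q' : Q n) r, rQ n (q + q') r = rQ n q r + rQ n q' r
  rQ_addr : ∀ n (q : Q n) (r s : R (n + 1)), rQ n q (r + s) = rQ n q r + rQ n q s
  rQ_one : ∀ n q, rQ n q 1 = q
  rQ_mul : ∀ n (q : Q n) (r s : R (n + 1)), rQ n q (r * s) = rQ n (rQ n q r) s
  lrQ : ∀ n (r : R n) (q : Q n) (s : R (n + 1)),
    rQ n (lQ n r q) s = lQ n r (rQ n q s)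
  tau_addl : ∀ n (p p' : P n) q, tau n (p + p') q = tau n p q + tau n p' q
  tau_addr : ∀ n (p : P n) (q q' : Q n), tau n p (q + q') = tau n p q + tau n p q'
  sig_addl : ∀ n (q q' : Q n) p, sig n (q + q') p = sig n q p + sig n q' p
  sig_addr : ∀ n (q : Q n) (p p' : P n), sig n q (p + p') = sig n q p + sig n q p'
  tau_l : ∀ n (r : R (n + 1)) p q, tau n (lP n r p) q = r * tau n p q
  tau_mid : ∀ n (p : P n) (r : R n) q, tau n (rP n p r) q = tau n p (lQ n r q)
  tau_r : ∀ n (p : P n) q (r : R (n + 1)), tau n p (rQ n q r) = tau n p q * r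
  sig_l : ∀ n (r : R n) q p, sig n (lQ n r q) p = r * sig n q p
  sig_mid : ∀ n (q : Q n) (r : R (n + 1)) p, sig n (rQ n q r) p = sig n q (lP n r p)
  sig_r : ∀ n (q : Q n) p (r : R n), sig n q (rP n p r) = sig n q p * r
  assocP : ∀ n (p : P n) (q : Q n) (p' : P n),
    lP n (tau n p q) p' = rP n p (sig n q p')
  assocQ : ∀ n (q : Q n) (p : P n) (q' : Q n),
    lQ n (sig n q p) q' = rQ n q (tau n p q')
  tau_surj : ∀ n (r : R (n + 1)),
    r ∈ AddSubgroup.closure {x : R (n + 1) | ∃ p q, x = tau n p q}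
  sig_surj : ∀ n (r : R n),
    r ∈ AddSubgroup.closure {x : R n | ∃ q p, x = sig n q p}

attribute [instance] MCtx.acgQ

/-- Generic construction of a family of data indexed by `n ≥ n₁` by recursion. -/
def towerRec {T : ℕ → Sort*} (n₁ : ℕ) (base : T n₁)
    (step : ∀ n, n₁ ≤ n → T n → T (n + 1)) : ∀ n, n₁ ≤ n → T n
  | 0, h => (Nat.le_zero.mp h) ▸ base
  | n + 1, h =>
      if hn : n₁ ≤ n then step n hn (towerRec n₁ base step n hn)
      else (Nat.le_antisymm h (Nat.succ_le_of_lt (Nat.lt_of_not_le hn))) ▸ base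

lemma towerRec_succ {T : ℕ → Sort*} (n₁ : ℕ) (base : T n₁)
    (step : ∀ n, n₁ ≤ n → T n → T (n + 1)) (n : ℕ) (hn : n₁ ≤ n) (h : n₁ ≤ n + 1) :
    towerRec n₁ base step (n + 1) h = step n hn (towerRec n₁ base step n hn) := by
  simp only [towerRec, dif_pos hn]

lemma towerRec_self {T : ℕ → Sort*} (n₁ : ℕ) (base : T n₁)
    (step : ∀ n, n₁ ≤ n → T n → T (n + 1)) (h : n₁ ≤ n₁) :
    towerRec n₁ base step n₁ h = base := by
  match n₁ with
  | 0 => rfl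
  | m + 1 =>
      show towerRec (m + 1) base step (m + 1) h = base
      simp only [towerRec, dif_neg (Nat.not_succ_le_self m)]


section grhoms

variable {R P lP rP}

def grComp {X Y Z : GrMod R P lP rP} (g : GrHom R P lP rP Y Z) (f : GrHom R P lP rP X Y) :
    GrHom R P lP rP X Z :=
  ⟨fun n => (g.f n).comp (f.f n), fun n p m => by
    show g.f (n + 1) (f.f (n + 1) (X.act n p m)) = _
    rw [f.compat, g.compat]
    rfl⟩

def grId (X : GrMod R P lP rP) : GrHom R P lP rP X X :=
  ⟨fun n => LinearMap.id, fun n p m => rfl⟩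

@[simp] lemma grComp_f {X Y Z : GrMod R P lP rP} (g : GrHom R P lP rP Y Z)
    (f : GrHom R P lP rP X Y) (n : ℕ) (x : X.M n) :
    (grComp g f).f n x = g.f n (f.f n x) := rfl

@[simp] lemma grId_f (X : GrMod R P lP rP) (n : ℕ) (x : X.M n) :
    (grId X).f n x = x := rfl

end grhoms

namespace MCtx

lemma list_sum_neg {G : Type} [AddCommGroup G] (l : List G) :
    (l.map Neg.neg).sum = -l.sum := by
  induction l with
  | nil => simp
  | cons a l ih => simp [ih, neg_add]; abel

variable {R P lP rP}
variable (c : MCtx R P lP rP)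
include c

section basic

variable (n : ℕ)

lemma tau_zero_l (q : c.Q n) : c.tau n 0 q = 0 := by
  have h := c.tau_addl n 0 0 q
  rw [add_zero] at h
  have h2 : c.tau n 0 q + 0 = c.tau n 0 q + c.tau n 0 q := by rw [add_zero]; exact h
  exact (add_left_cancel h2).symm

lemma tau_neg_l (p : P n) (q : c.Q n) : c.tau n (-p) q = -c.tau n p q := by
  have h := c.tau_addl n p (-p) q
  rw [add_neg_cancel, c.tau_zero_l] at h
  exact eq_neg_of_add_eq_zero_right h.symm

end basic

section decomp

variable (n : ℕ)

lemma sig_zero_l (p : P n) : c.sig n 0 p = 0 := by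
  have h := c.sig_addl n 0 0 p
  rw [add_zero] at h
  have h2 : c.sig n 0 p + 0 = c.sig n 0 p + c.sig n 0 p := by rw [add_zero]; exact h
  exact (add_left_cancel h2).symm

lemma sig_neg_l (q : c.Q n) (p : P n) : c.sig n (-q) p = -c.sig n q p := by
  have h := c.sig_addl n q (-q) p
  rw [add_neg_cancel, c.sig_zero_l] at h
  exact eq_neg_of_add_eq_zero_right h.symm

lemma rQ_zero (q : c.Q n) : c.rQ n q 0 = 0 := by
  have h := c.rQ_addr n q 0 0
  rw [add_zero] at h
  have h2 : c.rQ n q 0 + 0 = c.rQ n q 0 + c.rQ n q 0 := by rw [add_zero]; exact h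
  exact (add_left_cancel h2).symm

lemma rP_zero (p : P n) : rP n p 0 = 0 := by
  have h := c.rP_addr n p 0 0
  rw [add_zero] at h
  have h2 : rP n p 0 + 0 = rP n p 0 + rP n p 0 := by rw [add_zero]; exact h
  exact (add_left_cancel h2).symm

lemma tdec_exists : ∃ l : List (P n × c.Q n),
    ((l.map fun z => c.tau n z.1 z.2).sum = (1 : R (n + 1))) := by
  refine AddSubgroup.closure_induction (p := fun g _ => ∃ l : List (P n × c.Q n),
      ((l.map fun z => c.tau n z.1 z.2).sum = g)) ?_ ?_ ?_ ?_ (c.tau_surj n 1)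
  case _ =>
    intro x hx 
    obtain ⟨p, q, rfl⟩ := hx; exact ⟨[(p, q)], by simp⟩
  case _ => exact ⟨[], by simp⟩
  case _ =>
    intro x y _ _ ihx ihy
    obtain ⟨l1, h1⟩ := ihx; obtain ⟨l2, h2⟩ := ihy
    exact ⟨l1 ++ l2, by simp [h1, h2]⟩
  case _ =>
    intro x _ ihx
    obtain ⟨l, hl⟩ := ihx
    refine ⟨l.map fun z => (-z.1, z.2), ?_⟩
    rw [List.map_map]
    have : ((fun z : P n × c.Q n => c.tau n z.1 z.2) ∘ fun z : P n × c.Q n => (-z.1, z.2))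
        = (Neg.neg ∘ fun z : P n × c.Q n => c.tau n z.1 z.2) := by
      funext z; exact c.tau_neg_l n z.1 z.2
    rw [this, ← List.map_map, list_sum_neg, hl]

lemma sdec_exists : ∃ l : List (c.Q n × P n),
    ((l.map fun z => c.sig n z.1 z.2).sum = (1 : R n)) := by
  refine AddSubgroup.closure_induction (p := fun g _ => ∃ l : List (c.Q n × P n),
      ((l.map fun z => c.sig n z.1 z.2).sum = g)) ?_ ?_ ?_ ?_ (c.sig_surj n 1)
  case _ =>
    intro x hx 
    obtain ⟨q, p, rfl⟩ := hx; exact ⟨[(q, p)], by simp⟩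
  case _ => exact ⟨[], by simp⟩
  case _ =>
    intro x y _ _ ihx ihy
    obtain ⟨l1, h1⟩ := ihx; obtain ⟨l2, h2⟩ := ihy
    exact ⟨l1 ++ l2, by simp [h1, h2]⟩
  case _ =>
    intro x _ ihx
    obtain ⟨l, hl⟩ := ihx
    refine ⟨l.map fun z => (-z.1, z.2), ?_⟩
    rw [List.map_map]
    have : ((fun z : c.Q n × P n => c.sig n z.1 z.2) ∘ fun z : c.Q n × P n => (-z.1, z.2))
        = (Neg.neg ∘ fun z : c.Q n × P n => c.sig n z.1 z.2) := by
      funext z; exact c.sig_neg_l n z.1 z.2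
    rw [this, ← List.map_map, list_sum_neg, hl]

/-- A fixed finite decomposition `1 = Σ τ(pᵢ, qᵢ)` in `R (n+1)`. -/
def tdec : List (P n × c.Q n) := (c.tdec_exists n).choose

lemma tdec_sum : (((c.tdec n).map fun z => c.tau n z.1 z.2).sum = (1 : R (n + 1))) :=
  (c.tdec_exists n).choose_spec

/-- A fixed finite decomposition `1 = Σ σ(qᵢ, pᵢ)` in `R n`. -/
def sdec : List (c.Q n × P n) := (c.sdec_exists n).choose

lemma sdec_sum : (((c.sdec n).map fun z => c.sig n z.1 z.2).sum = (1 : R n)) :=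
  (c.sdec_exists n).choose_spec

end decomp

section updown

variable (n : ℕ)

/-! ### The "up" functor `A ↦ P_n ⊗_{R_n} A`, modeled as `Hom_{R_n}(Q_n, A)` -/

variable (A : Type) [AddCommGroup A] [Module (R n) A]

def UpS : AddSubgroup (c.Q n →+ A) where
  carrier := {φ | ∀ r q, φ (c.lQ n r q) = r • φ q}
  add_mem' := by intro a b ha hb r q; simp [ha r q, hb r q, smul_add]
  zero_mem' := by intro r q; simp
  neg_mem' := by intro a ha r q; simp [ha r q]

def Up : Type := ↥(c.UpS n A)

instance : AddCommGroup (c.Up n A) := inferInstanceAs (AddCommGroup ↥(c.UpS n A))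

variable {n A}

lemma Up.lin (φ : c.Up n A) (r : R n) (q : c.Q n) :
    φ.1 (c.lQ n r q) = r • φ.1 q := φ.2 r q

lemma Up.ext {φ ψ : c.Up n A} (h : ∀ q, φ.1 q = ψ.1 q) : φ = ψ :=
  Subtype.ext (AddMonoidHom.ext h)

@[simp] lemma Up.add_apply (φ ψ : c.Up n A) (q : c.Q n) :
    (φ + ψ).1 q = φ.1 q + ψ.1 q := rfl

@[simp] lemma Up.zero_apply (q : c.Q n) : (0 : c.Up n A).1 q = 0 := rfl

variable (n A)

instance : SMul (R (n + 1)) (c.Up n A) :=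
  ⟨fun r φ => ⟨φ.1.comp (AddMonoidHom.mk' (fun q => c.rQ n q r)
      (fun a b => c.rQ_addl n a b r)),
    fun s q => by
      show φ.1 (c.rQ n (c.lQ n s q) r) = s • φ.1 (c.rQ n q r)
      rw [c.lrQ, φ.2 s _]⟩⟩

@[simp] lemma Up.smul_apply (r : R (n + 1)) (φ : c.Up n A) (q : c.Q n) :
    (r • φ).1 q = φ.1 (c.rQ n q r) := rfl

instance : Module (R (n + 1)) (c.Up n A) where
  one_smul φ := Up.ext c fun q => by rw [Up.smul_apply, c.rQ_one]
  mul_smul r s φ := Up.ext c fun q => by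
    simp only [Up.smul_apply]; rw [c.rQ_mul]
  smul_zero r := Up.ext c fun q => rfl
  smul_add r φ ψ := Up.ext c fun q => rfl
  add_smul r s φ := Up.ext c fun q => by
    simp only [Up.smul_apply, Up.add_apply]; rw [c.rQ_addr, map_add]
  zero_smul φ := Up.ext c fun q => by
    simp only [Up.smul_apply, Up.zero_apply]; rw [c.rQ_zero, map_zero]

/-- Evaluation at `q` as an additive map. -/
def upEv (q : c.Q n) : c.Up n A →+ A :=
  AddMonoidHom.mk' (fun φ => φ.1 q) (fun a b => rfl)

@[simp] lemma upEv_apply (q : c.Q n) (φ : c.Up n A) : c.upEv n A q φ = φ.1 q := rfl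

variable {n A}

/-- The element `p ⊗ a` of `Up n A`. -/
def upEl (p : P n) (a : A) : c.Up n A :=
  ⟨AddMonoidHom.mk' (fun q => c.sig n q p • a)
      (fun q q' => by
        show c.sig n (q + q') p • a = c.sig n q p • a + c.sig n q' p • a
        rw [c.sig_addl, add_smul]),
    fun r q => by
      show c.sig n (c.lQ n r q) p • a = r • (c.sig n q p • a)
      rw [c.sig_l, mul_smul]⟩

@[simp] lemma upEl_apply (p : P n) (a : A) (q : c.Q n) :
    (c.upEl (n := n) p a).1 q = c.sig n q p • a := rfl

lemma upEl_addl (p p' : P n) (a : A) :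
    c.upEl (p + p') a = c.upEl p a + c.upEl p' a :=
  Up.ext c fun q => by simp [c.sig_addr, add_smul]

lemma upEl_addr (p : P n) (a a' : A) :
    c.upEl p (a + a') = c.upEl p a + c.upEl p a' :=
  Up.ext c fun q => by simp [smul_add]

lemma upEl_smul_l (r : R (n + 1)) (p : P n) (a : A) :
    c.upEl (lP n r p) a = r • c.upEl p a :=
  Up.ext c fun q => by
    simp only [upEl_apply, Up.smul_apply]
    rw [c.sig_mid]

lemma upEl_smul_r (p : P n) (r : R n) (a : A) :
    c.upEl (rP n p r) a = c.upEl p (r • a) :=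
  Up.ext c fun q => by
    simp only [upEl_apply]
    rw [c.sig_r, mul_smul]

/-! ### The "down" functor `M ↦ Q_n ⊗_{R_{n+1}} M` -/

variable (n) (M : Type) [AddCommGroup M] [Module (R (n + 1)) M]

def DownS (c' : MCtx R P lP rP) : AddSubgroup (P n →+ M) where
  carrier := {ψ | ∀ r p, ψ (lP n r p) = r • ψ p}
  add_mem' := by intro a b ha hb r p; simp [ha r p, hb r p, smul_add]
  zero_mem' := by intro r p; simp
  neg_mem' := by intro a ha r p; simp [ha r p]

def Down (c' : MCtx R P lP rP) : Type := ↥(DownS n M c')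

instance : AddCommGroup (c.Down n M) := inferInstanceAs (AddCommGroup ↥(DownS n M c))

variable {n M}

lemma Down.lin (ψ : c.Down n M) (r : R (n + 1)) (p : P n) :
    ψ.1 (lP n r p) = r • ψ.1 p := ψ.2 r p

lemma Down.ext {φ ψ : c.Down n M} (h : ∀ p, φ.1 p = ψ.1 p) : φ = ψ :=
  Subtype.ext (AddMonoidHom.ext h)

@[simp] lemma Down.add_apply (φ ψ : c.Down n M) (p : P n) :
    (φ + ψ).1 p = φ.1 p + ψ.1 p := rfl

@[simp] lemma Down.zero_apply (p : P n) : (0 : c.Down n M).1 p = 0 := rfl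

variable (n M)

instance : SMul (R n) (c.Down n M) :=
  ⟨fun r ψ => ⟨ψ.1.comp (AddMonoidHom.mk' (fun p => rP n p r)
      (fun a b => c.rP_addl n a b r)),
    fun s p => by
      show ψ.1 (rP n (lP n s p) r) = s • ψ.1 (rP n p r)
      rw [c.lrP, ψ.2 s _]⟩⟩

@[simp] lemma Down.smul_apply (r : R n) (ψ : c.Down n M) (p : P n) :
    (r • ψ).1 p = ψ.1 (rP n p r) := rfl

instance : Module (R n) (c.Down n M) where
  one_smul ψ := Down.ext c fun p => by rw [Down.smul_apply, c.rP_one]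
  mul_smul r s ψ := Down.ext c fun p => by
    simp only [Down.smul_apply]; rw [c.rP_mul]
  smul_zero r := Down.ext c fun p => rfl
  smul_add r φ ψ := Down.ext c fun p => rfl
  add_smul r s ψ := Down.ext c fun p => by
    simp only [Down.smul_apply, Down.add_apply]; rw [c.rP_addr, map_add]
  zero_smul ψ := Down.ext c fun p => by
    simp only [Down.smul_apply, Down.zero_apply]; rw [c.rP_zero, map_zero]

def downEv (p : P n) : c.Down n M →+ M :=
  AddMonoidHom.mk' (fun ψ => ψ.1 p) (fun a b => rfl)

@[simp] lemma downEv_apply (p : P n) (ψ : c.Down n M) : c.downEv n M p ψ = ψ.1 p := rfl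

variable {n M}

/-- The element `q ⊗ m` of `Down n M`. -/
def downEl (q : c.Q n) (m : M) : c.Down n M :=
  ⟨AddMonoidHom.mk' (fun p => c.tau n p q • m)
      (fun p p' => by
        show c.tau n (p + p') q • m = c.tau n p q • m + c.tau n p' q • m
        rw [c.tau_addl, add_smul]),
    fun r p => by
      show c.tau n (lP n r p) q • m = r • (c.tau n p q • m)
      rw [c.tau_l, mul_smul]⟩

@[simp] lemma downEl_apply (q : c.Q n) (m : M) (p : P n) :
    (c.downEl (n := n) q m).1 p = c.tau n p q • m := rfl

lemma downEl_addl (q q' : c.Q n) (m : M) :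
    c.downEl (q + q') m = c.downEl q m + c.downEl q' m :=
  Down.ext c fun p => by simp [c.tau_addr, add_smul]

lemma downEl_addr (q : c.Q n) (m m' : M) :
    c.downEl q (m + m') = c.downEl q m + c.downEl q m' :=
  Down.ext c fun p => by simp [smul_add]

lemma downEl_smul_l (r : R n) (q : c.Q n) (m : M) :
    c.downEl (c.lQ n r q) m = r • c.downEl q m :=
  Down.ext c fun p => by
    simp only [downEl_apply, Down.smul_apply]
    rw [c.tau_mid]

lemma downEl_smul_r (q : c.Q n) (r : R (n + 1)) (m : M) :
    c.downEl (c.rQ n q r) m = c.downEl q (r • m) :=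
  Down.ext c fun p => by
    simp only [downEl_apply]
    rw [c.tau_r, mul_smul]

@[simp] lemma downEl_zero (q : c.Q n) : c.downEl q (0 : M) = 0 :=
  Down.ext c fun p => by simp

end updown

section identities

variable {n : ℕ} {A B : Type} [AddCommGroup A] [Module (R n) A]
  [AddCommGroup B] [Module (R n) B]
  {M M' : Type} [AddCommGroup M] [Module (R (n + 1)) M]
  [AddCommGroup M'] [Module (R (n + 1)) M']

lemma up_sum_apply (l : List (c.Up n A)) (q : c.Q n) :
    (l.sum).1 q = (l.map (fun φ => φ.1 q)).sum := by
  have := map_list_sum (c.upEv n A q) l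
  exact this

lemma down_sum_apply (l : List (c.Down n M)) (p : P n) :
    (l.sum).1 p = (l.map (fun ψ => ψ.1 p)).sum := by
  have := map_list_sum (c.downEv n M p) l
  exact this

/-- Every element of `Up n A` is the canonical sum of its "matrix coefficients". -/
lemma up_span (φ : c.Up n A) :
    ((c.tdec n).map fun z => c.upEl z.1 (φ.1 z.2)).sum = φ := by
  refine Up.ext c fun q => ?_
  rw [c.up_sum_apply, List.map_map]
  have h1 : ((c.tdec n).map ((fun ψ : c.Up n A => ψ.1 q) ∘ fun z => c.upEl z.1 (φ.1 z.2)))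
      = (c.tdec n).map (fun z => φ.1 (c.rQ n q (c.tau n z.1 z.2))) := by
    refine List.map_congr_left fun z _ => ?_
    show c.sig n q z.1 • φ.1 z.2 = _
    rw [← Up.lin c φ, c.assocQ]
  rw [h1]
  have h2 : (c.tdec n).map (fun z => φ.1 (c.rQ n q (c.tau n z.1 z.2)))
      = ((c.tdec n).map (fun z => c.tau n z.1 z.2)).map
          (φ.1.comp (AddMonoidHom.mk' (fun r => c.rQ n q r) (fun a b => c.rQ_addr n q a b))) := by
    rw [List.map_map]; rfl
  rw [h2, ← map_list_sum, c.tdec_sum]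
  show φ.1 (c.rQ n q 1) = φ.1 q
  rw [c.rQ_one]

lemma down_span (ψ : c.Down n M) :
    ((c.sdec n).map fun z => c.downEl z.1 (ψ.1 z.2)).sum = ψ := by
  refine Down.ext c fun p => ?_
  rw [c.down_sum_apply, List.map_map]
  have h1 : ((c.sdec n).map ((fun χ : c.Down n M => χ.1 p) ∘ fun z => c.downEl z.1 (ψ.1 z.2)))
      = (c.sdec n).map (fun z => ψ.1 (rP n p (c.sig n z.1 z.2))) := by
    refine List.map_congr_left fun z _ => ?_
    show c.tau n p z.1 • ψ.1 z.2 = _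
    rw [← Down.lin c ψ, c.assocP]
  rw [h1]
  have h2 : (c.sdec n).map (fun z => ψ.1 (rP n p (c.sig n z.1 z.2)))
      = ((c.sdec n).map (fun z => c.sig n z.1 z.2)).map
          (ψ.1.comp (AddMonoidHom.mk' (fun r => rP n p r) (fun a b => c.rP_addr n p a b))) := by
    rw [List.map_map]; rfl
  rw [h2, ← map_list_sum, c.sdec_sum]
  show ψ.1 (rP n p 1) = ψ.1 p
  rw [c.rP_one]

lemma up_el_recover (a : A) :
    ((c.sdec n).map fun z => (c.upEl z.2 a).1 z.1).sum = a := by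
  have h2 : (c.sdec n).map (fun z => (c.upEl (n := n) z.2 a).1 z.1)
      = ((c.sdec n).map (fun z => c.sig n z.1 z.2)).map
          (AddMonoidHom.mk' (fun r : R n => r • a) (fun r s => add_smul r s a)) := by
    rw [List.map_map]; rfl
  rw [h2, ← map_list_sum, c.sdec_sum]
  show (1 : R n) • a = a
  rw [one_smul]

lemma down_el_recover (m : M) :
    ((c.tdec n).map fun z => (c.downEl z.2 m).1 z.1).sum = m := by
  have h2 : (c.tdec n).map (fun z => (c.downEl (n := n) z.2 m).1 z.1)
      = ((c.tdec n).map (fun z => c.tau n z.1 z.2)).map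
          (AddMonoidHom.mk' (fun r : R (n + 1) => r • m) (fun r s => add_smul r s m)) := by
    rw [List.map_map]; rfl
  rw [h2, ← map_list_sum, c.tdec_sum]
  show (1 : R (n + 1)) • m = m
  rw [one_smul]

/-- Two additive maps out of `Up n A` agreeing on all `upEl p a` agree. -/
lemma up_add_ext {C : Type} [AddCommGroup C] (g g' : c.Up n A →+ C)
    (h : ∀ p a, g (c.upEl p a) = g' (c.upEl p a)) (φ : c.Up n A) : g φ = g' φ := by
  rw [← c.up_span φ, map_list_sum, map_list_sum, List.map_map, List.map_map]
  congr 1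
  exact List.map_congr_left fun z _ => h z.1 (φ.1 z.2)

lemma down_add_ext {C : Type} [AddCommGroup C] (g g' : c.Down n M →+ C)
    (h : ∀ q m, g (c.downEl q m) = g' (c.downEl q m)) (ψ : c.Down n M) : g ψ = g' ψ := by
  rw [← c.down_span ψ, map_list_sum, map_list_sum, List.map_map, List.map_map]
  congr 1
  exact List.map_congr_left fun z _ => h z.1 (ψ.1 z.2)

/-! ### Functoriality -/

def UpMap (g : A →ₗ[R n] B) : c.Up n A →ₗ[R (n + 1)] c.Up n B where
  toFun φ := ⟨g.toAddMonoidHom.comp φ.1, fun r q => by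
    show g (φ.1 (c.lQ n r q)) = r • g (φ.1 q)
    rw [Up.lin c φ, map_smul]⟩
  map_add' φ ψ := Up.ext c fun q => by
    show g ((φ + ψ).1 q) = g (φ.1 q) + g (ψ.1 q)
    rw [Up.add_apply, map_add]
  map_smul' r φ := Up.ext c fun q => rfl

@[simp] lemma UpMap_apply (g : A →ₗ[R n] B) (φ : c.Up n A) (q : c.Q n) :
    (c.UpMap g φ).1 q = g (φ.1 q) := rfl

lemma UpMap_upEl (g : A →ₗ[R n] B) (p : P n) (a : A) :
    c.UpMap g (c.upEl p a) = c.upEl p (g a) :=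
  Up.ext c fun q => by simp [map_smul]

def DownMap (f : M →ₗ[R (n + 1)] M') : c.Down n M →ₗ[R n] c.Down n M' where
  toFun ψ := ⟨f.toAddMonoidHom.comp ψ.1, fun r p => by
    show f (ψ.1 (lP n r p)) = r • f (ψ.1 p)
    rw [Down.lin c ψ, map_smul]⟩
  map_add' φ ψ := Down.ext c fun p => by
    show f ((φ + ψ).1 p) = f (φ.1 p) + f (ψ.1 p)
    rw [Down.add_apply, map_add]
  map_smul' r ψ := Down.ext c fun p => rfl

@[simp] lemma DownMap_apply (f : M →ₗ[R (n + 1)] M') (ψ : c.Down n M) (p : P n) :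
    (c.DownMap f ψ).1 p = f (ψ.1 p) := rfl

lemma DownMap_downEl (f : M →ₗ[R (n + 1)] M') (q : c.Q n) (m : M) :
    c.DownMap f (c.downEl q m) = c.downEl q (f m) :=
  Down.ext c fun p => by simp [map_smul]

/-- `Down` is faithful. -/
lemma down_faithful (f f' : M →ₗ[R (n + 1)] M')
    (h : ∀ ψ, c.DownMap f ψ = c.DownMap f' ψ) : f = f' := by
  ext m
  rw [← c.down_el_recover (n := n) m]
  have hmaps : ∀ z : P n × c.Q n, f ((c.downEl z.2 m).1 z.1) = f' ((c.downEl z.2 m).1 z.1) := by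
    intro z
    have := congrArg (fun ψ => ψ.1 z.1) (h (c.downEl z.2 m))
    simpa using this
  rw [map_list_sum, map_list_sum, List.map_map, List.map_map]
  congr 1
  exact List.map_congr_left fun z _ => hmaps z

/-- `Up` is faithful. -/
lemma up_faithful (g g' : A →ₗ[R n] B)
    (h : ∀ φ, c.UpMap g φ = c.UpMap g' φ) : g = g' := by
  ext a
  rw [← c.up_el_recover (n := n) a]
  have hmaps : ∀ z : c.Q n × P n, g ((c.upEl z.2 a).1 z.1) = g' ((c.upEl z.2 a).1 z.1) := by
    intro z
    have := congrArg (fun φ => φ.1 z.1) (h (c.upEl z.2 a))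
    simpa using this
  rw [map_list_sum, map_list_sum, List.map_map, List.map_map]
  congr 1
  exact List.map_congr_left fun z _ => hmaps z

/-- `Down` reflects injectivity. -/
lemma down_reflect_inj (f : M →ₗ[R (n + 1)] M')
    (h : Function.Injective (c.DownMap f)) : Function.Injective f := by
  rw [injective_iff_map_eq_zero]
  intro m hm
  have h0 : ∀ q : c.Q n, c.downEl q m = 0 := by
    intro q
    apply h
    rw [DownMap_downEl, hm, downEl_zero, map_zero]
  rw [← c.down_el_recover (n := n) m]
  have : ((c.tdec n).map fun z => (c.downEl (n := n) z.2 m).1 z.1) =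
      (c.tdec n).map fun _ => (0 : M) := by
    refine List.map_congr_left fun z _ => ?_
    rw [h0 z.2]; rfl
  rw [this]
  simp

/-- `Down` preserves surjectivity. -/
lemma down_pres_surj (f : M →ₗ[R (n + 1)] M')
    (hf : Function.Surjective f) : Function.Surjective (c.DownMap f) := by
  intro ψ'
  have pre : ∀ m' : M', ∃ m, f m = m' := hf
  refine ⟨((c.sdec n).map fun z => c.downEl z.1 (pre (ψ'.1 z.2)).choose).sum, ?_⟩
  rw [map_list_sum, List.map_map]
  have : ((c.sdec n).map ((c.DownMap f) ∘ fun z => c.downEl z.1 (pre (ψ'.1 z.2)).choose))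
      = (c.sdec n).map fun z => c.downEl z.1 (ψ'.1 z.2) := by
    refine List.map_congr_left fun z _ => ?_
    show c.DownMap f (c.downEl z.1 _) = _
    rw [DownMap_downEl, (pre (ψ'.1 z.2)).choose_spec]
  rw [this, c.down_span]

/-- Decomposition of any `q : Q n` via the chosen pairs. -/
lemma q_decomp (q : c.Q n) :
    ((c.tdec n).map fun z => c.lQ n (c.sig n q z.1) z.2).sum = q := by
  have h1 : (c.tdec n).map (fun z => c.lQ n (c.sig n q z.1) z.2)
      = (c.tdec n).map (fun z => c.rQ n q (c.tau n z.1 z.2)) :=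
    List.map_congr_left fun z _ => c.assocQ n q z.1 z.2
  have h2 : (c.tdec n).map (fun z => c.rQ n q (c.tau n z.1 z.2))
      = ((c.tdec n).map (fun z => c.tau n z.1 z.2)).map
          (AddMonoidHom.mk' (fun r => c.rQ n q r) (fun a b => c.rQ_addr n q a b)) := by
    rw [List.map_map]; rfl
  rw [h1, h2, ← map_list_sum, c.tdec_sum]
  exact c.rQ_one n q

/-- Decomposition of any `p : P n` via the chosen pairs. -/
lemma p_decomp (p : P n) :
    ((c.sdec n).map fun z => lP n (c.tau n p z.1) z.2).sum = p := by
  have h1 : (c.sdec n).map (fun z => lP n (c.tau n p z.1) z.2)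
      = (c.sdec n).map (fun z => rP n p (c.sig n z.1 z.2)) :=
    List.map_congr_left fun z _ => c.assocP n p z.1 z.2
  have h2 : (c.sdec n).map (fun z => rP n p (c.sig n z.1 z.2))
      = ((c.sdec n).map (fun z => c.sig n z.1 z.2)).map
          (AddMonoidHom.mk' (fun r => rP n p r) (fun a b => c.rP_addr n p a b)) := by
    rw [List.map_map]; rfl
  rw [h1, h2, ← map_list_sum, c.sdec_sum]
  exact c.rP_one n p

/-- `downEl · m` as an additive map in `q`. -/
def downElHom (m : M) : c.Q n →+ c.Down n M :=
  AddMonoidHom.mk' (fun q => c.downEl q m) (fun a b => c.downEl_addl a b m)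

@[simp] lemma downElHom_apply (m : M) (q : c.Q n) : c.downElHom m q = c.downEl q m := rfl

/-- `Down` preserves finite generation. -/
lemma down_pres_fg [hM : Module.Finite (R (n + 1)) M] :
    Module.Finite (R n) (c.Down n M) := by
  classical
  obtain ⟨S, hSfin, hSspan⟩ :=
    Submodule.fg_def.mp (Module.Finite.fg_top (R := R (n + 1)) (M := M))
  set G : Set (c.Down n M) := {x | ∃ z ∈ c.tdec n, ∃ m ∈ S, x = c.downEl z.2 m} with hG
  have hfin : G.Finite := by
    have hsub : G ⊆ (fun zm : (P n × c.Q n) × M => c.downEl zm.1.2 zm.2) ''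
        (({z | z ∈ c.tdec n} : Set _) ×ˢ S) := by
      rintro x ⟨z, hz, m, hm, rfl⟩
      exact ⟨(z, m), ⟨hz, hm⟩, rfl⟩
    exact Set.Finite.subset (Set.Finite.image _ (Set.Finite.prod (List.finite_toSet _) hSfin)) hsub
  have key : ∀ m : M, m ∈ Submodule.span (R (n + 1)) S →
      ∀ q, c.downEl q m ∈ Submodule.span (R n) G := by
    intro m hm
    refine Submodule.span_induction (p := fun x _ => ∀ q, c.downEl q x ∈ Submodule.span (R n) G)
      ?_ ?_ ?_ ?_ hm
    · intro x hx q
      rw [← c.q_decomp q]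
      rw [show c.downEl (((c.tdec n).map fun z => c.lQ n (c.sig n q z.1) z.2).sum) x
            = (c.downElHom x) (((c.tdec n).map fun z => c.lQ n (c.sig n q z.1) z.2).sum) from rfl,
        map_list_sum, List.map_map]
      refine list_sum_mem ?_
      intro y hy
      simp only [List.mem_map, Function.comp_apply] at hy
      obtain ⟨z, hz, rfl⟩ := hy
      rw [downElHom_apply, c.downEl_smul_l]
      exact Submodule.smul_mem _ _ (Submodule.subset_span ⟨z, hz, x, hx, rfl⟩)
    · intro q; rw [downEl_zero]; exact Submodule.zero_mem _
    · intro x y _ _ ihx ihy q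
      rw [downEl_addr]
      exact Submodule.add_mem _ (ihx q) (ihy q)
    · intro r x _ ihx q
      rw [← c.downEl_smul_r]
      exact ihx (c.rQ n q r)
  constructor
  rw [Submodule.fg_def]
  refine ⟨G, hfin, ?_⟩
  rw [Submodule.eq_top_iff']
  intro ψ
  rw [← c.down_span ψ]
  refine list_sum_mem ?_
  intro y hy
  simp only [List.mem_map] at hy
  obtain ⟨z, hz, rfl⟩ := hy
  exact key (ψ.1 z.2) (by rw [hSspan]; trivial) z.1

end identities

section equivalences

variable {n : ℕ} {A B : Type} [AddCommGroup A] [Module (R n) A]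
  [AddCommGroup B] [Module (R n) B]
  {M M' : Type} [AddCommGroup M] [Module (R (n + 1)) M]
  [AddCommGroup M'] [Module (R (n + 1)) M']

/-- The unit `A → Down n (Up n A)`, `a ↦ (p ↦ (q ↦ σ(q,p)•a))`, as a linear map. -/
def unitMap : A →ₗ[R n] c.Down n (c.Up n A) where
  toFun a := ⟨AddMonoidHom.mk' (fun p => c.upEl p a) (fun p p' => c.upEl_addl p p' a),
    fun r p => c.upEl_smul_l r p a⟩
  map_add' a a' := Down.ext c fun p => by
    show c.upEl p (a + a') = c.upEl p a + c.upEl p a'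
    exact c.upEl_addr p a a'
  map_smul' r a := Down.ext c fun p => by
    show c.upEl p (r • a) = c.upEl (rP n p r) a
    exact (c.upEl_smul_r p r a).symm

@[simp] lemma unitMap_apply (a : A) (p : P n) :
    ((c.unitMap a : c.Down n (c.Up n A))).1 p = c.upEl p a := rfl

/-- The unit is an isomorphism. -/
def unitIso : A ≃ₗ[R n] c.Down n (c.Up n A) :=
  { c.unitMap with
    invFun := fun ψ => ((c.sdec n).map fun z => ((ψ.1 z.2).1 z.1 : A)).sum
    left_inv := by
      intro a
      show ((c.sdec n).map fun z => ((c.unitMap a).1 z.2).1 z.1).sum = a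
      have h : (c.sdec n).map (fun z => (((c.unitMap (n := n) a).1 z.2).1 z.1 : A))
          = (c.sdec n).map (fun z => ((c.upEl (n := n) z.2 a).1 z.1 : A)) := by
        refine List.map_congr_left fun z _ => rfl
      rw [h]
      exact c.up_el_recover a
    right_inv := by
      intro ψ
      refine Down.ext c fun p => Up.ext c fun q => ?_
      show c.sig n q p • ((c.sdec n).map fun z => ((ψ.1 z.2).1 z.1 : A)).sum = (ψ.1 p).1 q
      -- move the scalar inside and transform each term
      have hsm : c.sig n q p • ((c.sdec n).map fun z => ((ψ.1 z.2).1 z.1 : A)).sum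
          = ((c.sdec n).map fun z => c.sig n q p • ((ψ.1 z.2).1 z.1 : A)).sum := by
        have := map_list_sum (AddMonoidHom.mk' (fun a : A => c.sig n q p • a)
          (fun a b => smul_add _ a b)) ((c.sdec n).map fun z => ((ψ.1 z.2).1 z.1 : A))
        simpa [List.map_map, Function.comp_def] using this
      rw [hsm]
      have hterm : (c.sdec n).map (fun z => c.sig n q p • ((ψ.1 z.2).1 z.1 : A))
          = (c.sdec n).map (fun z => (ψ.1 (rP n p (c.sig n z.1 z.2))).1 q) := by
        refine List.map_congr_left fun z _ => ?_
        -- σ(q,p) • (ψ p_z) q_z = (ψ p_z) (lQ (σ q p) q_z) = (ψ p_z)(rQ q (τ p q_z))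
        rw [← Up.lin c (ψ.1 z.2) (c.sig n q p) z.1, c.assocQ]
        -- = (τ(p, q_z) • ψ p_z) q = ψ (lP (τ p q_z) p_z) q = ψ (rP p (σ q_z p_z)) q
        show ((c.tau n p z.1 • ψ.1 z.2 : c.Up n A)).1 q = _
        rw [← Down.lin c ψ (c.tau n p z.1) z.2, c.assocP]
      rw [hterm]
      have hfin : (c.sdec n).map (fun z => ((ψ.1 (rP n p (c.sig n z.1 z.2))).1 q : A))
          = ((c.sdec n).map (fun z => c.sig n z.1 z.2)).map
              (((c.upEv n A q).comp ψ.1).comp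
                (AddMonoidHom.mk' (fun r => rP n p r) (fun a b => c.rP_addr n p a b))) := by
        rw [List.map_map]; rfl
      rw [hfin, ← map_list_sum, c.sdec_sum]
      show (ψ.1 (rP n p 1)).1 q = (ψ.1 p).1 q
      rw [c.rP_one] }

@[simp] lemma unitIso_apply (a : A) (p : P n) :
    ((c.unitIso a : c.Down n (c.Up n A))).1 p = c.upEl p a := rfl

/-- The counit (inverse direction) `M → Up n (Down n M)`, `m ↦ (q ↦ (p ↦ τ(p,q)•m))`. -/
def coevMap : M →ₗ[R (n + 1)] c.Up n (c.Down n M) where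
  toFun m := ⟨AddMonoidHom.mk' (fun q => c.downEl q m) (fun q q' => c.downEl_addl q q' m),
    fun r q => c.downEl_smul_l r q m⟩
  map_add' m m' := Up.ext c fun q => by
    show c.downEl q (m + m') = c.downEl q m + c.downEl q m'
    exact c.downEl_addr q m m'
  map_smul' r m := Up.ext c fun q => by
    show c.downEl q (r • m) = c.downEl (c.rQ n q r) m
    exact (c.downEl_smul_r q r m).symm

@[simp] lemma coevMap_apply (m : M) (q : c.Q n) :
    ((c.coevMap m : c.Up n (c.Down n M))).1 q = c.downEl q m := rfl

/-- The coevaluation is an isomorphism. -/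
def coevIso : M ≃ₗ[R (n + 1)] c.Up n (c.Down n M) :=
  { c.coevMap with
    invFun := fun φ => ((c.tdec n).map fun z => ((φ.1 z.2).1 z.1 : M)).sum
    left_inv := by
      intro m
      show ((c.tdec n).map fun z => ((c.coevMap m).1 z.2).1 z.1).sum = m
      have h : (c.tdec n).map (fun z => (((c.coevMap (n := n) m).1 z.2).1 z.1 : M))
          = (c.tdec n).map (fun z => ((c.downEl (n := n) z.2 m).1 z.1 : M)) := by
        refine List.map_congr_left fun z _ => rfl
      rw [h]
      exact c.down_el_recover m
    right_inv := by
      intro φ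
      refine Up.ext c fun q => Down.ext c fun p => ?_
      show c.tau n p q • ((c.tdec n).map fun z => ((φ.1 z.2).1 z.1 : M)).sum = (φ.1 q).1 p
      have hsm : c.tau n p q • ((c.tdec n).map fun z => ((φ.1 z.2).1 z.1 : M)).sum
          = ((c.tdec n).map fun z => c.tau n p q • ((φ.1 z.2).1 z.1 : M)).sum := by
        have := map_list_sum (AddMonoidHom.mk' (fun m : M => c.tau n p q • m)
          (fun a b => smul_add _ a b)) ((c.tdec n).map fun z => ((φ.1 z.2).1 z.1 : M))
        simpa [List.map_map, Function.comp_def] using this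
      rw [hsm]
      have hterm : (c.tdec n).map (fun z => c.tau n p q • ((φ.1 z.2).1 z.1 : M))
          = (c.tdec n).map (fun z => (φ.1 (c.rQ n q (c.tau n z.1 z.2))).1 p) := by
        refine List.map_congr_left fun z _ => ?_
        -- τ(p,q) • (φ q_z) p_z = (φ q_z)(lP (τ p q) p_z) = (φ q_z)(rP p (σ q p_z))
        rw [← Down.lin c (φ.1 z.2) (c.tau n p q) z.1, c.assocP]
        -- = (σ(q,p_z) • φ q_z) p = φ (lQ (σ q p_z) q_z) p = φ (rQ q (τ p_z q_z)) p
        show ((c.sig n q z.1 • φ.1 z.2 : c.Down n M)).1 p = _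
        rw [← Up.lin c φ (c.sig n q z.1) z.2, c.assocQ]
      rw [hterm]
      have hfin : (c.tdec n).map (fun z => ((φ.1 (c.rQ n q (c.tau n z.1 z.2))).1 p : M))
          = ((c.tdec n).map (fun z => c.tau n z.1 z.2)).map
              (((c.downEv n M p).comp φ.1).comp
                (AddMonoidHom.mk' (fun r => c.rQ n q r) (fun a b => c.rQ_addr n q a b))) := by
        rw [List.map_map]; rfl
      rw [hfin, ← map_list_sum, c.tdec_sum]
      show (φ.1 (c.rQ n q 1)).1 p = (φ.1 q).1 p
      rw [c.rQ_one] }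

@[simp] lemma coevIso_apply (m : M) (q : c.Q n) :
    ((c.coevIso m : c.Up n (c.Down n M))).1 q = c.downEl q m := rfl

/-- Naturality of the unit. -/
lemma unit_nat (g : A →ₗ[R n] B) (a : A) :
    c.unitIso (g a) = c.DownMap (c.UpMap g) (c.unitIso a) :=
  Down.ext c fun p => Up.ext c fun q => by
    show c.sig n q p • g a = g (c.sig n q p • a)
    rw [map_smul]

/-- Naturality of the coevaluation. -/
lemma coev_nat (f : M →ₗ[R (n + 1)] M') (m : M) :
    c.coevIso (f m) = c.UpMap (c.DownMap f) (c.coevIso m) :=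
  Up.ext c fun q => Down.ext c fun p => by
    show c.tau n p q • f m = f (c.tau n p q • m)
    rw [map_smul]

/-- `Up` on an isomorphism. -/
def UpEquiv (e : A ≃ₗ[R n] B) : c.Up n A ≃ₗ[R (n + 1)] c.Up n B :=
  LinearEquiv.ofLinear (c.UpMap e.toLinearMap) (c.UpMap e.symm.toLinearMap)
    (LinearMap.ext fun φ => Up.ext c fun q => by simp)
    (LinearMap.ext fun φ => Up.ext c fun q => by simp)

@[simp] lemma UpEquiv_apply (e : A ≃ₗ[R n] B) (φ : c.Up n A) (q : c.Q n) :
    ((c.UpEquiv e φ)).1 q = e (φ.1 q) := rfl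

/-- Descend a map `Up A → Up B` to a map `A → B`. -/
def nabla (G : c.Up n A →ₗ[R (n + 1)] c.Up n B) : A →ₗ[R n] B :=
  ((c.unitIso.symm.toLinearMap.comp (c.DownMap G)).comp c.unitIso.toLinearMap)

lemma UpMap_nabla (G : c.Up n A →ₗ[R (n + 1)] c.Up n B) :
    c.UpMap (c.nabla G) = G := by
  have h1 : c.DownMap (c.UpMap (c.nabla G)) = c.DownMap G := by
    have hd : ∀ a : A, c.DownMap (c.UpMap (c.nabla G)) (c.unitIso a)
        = c.DownMap G (c.unitIso a) := by
      intro a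
      rw [← c.unit_nat]
      show (c.unitIso ((c.nabla G) a) : c.Down n (c.Up n B)) = _
      show (c.unitIso (c.unitIso.symm (c.DownMap G (c.unitIso a))) : c.Down n (c.Up n B)) = _
      rw [LinearEquiv.apply_symm_apply]
    ext ψ
    have := hd (c.unitIso.symm ψ)
    rwa [LinearEquiv.apply_symm_apply] at this
  apply c.down_faithful
  intro ψ
  rw [h1]

lemma nabla_UpMap (g : A →ₗ[R n] B) : c.nabla (c.UpMap g) = g := by
  apply c.up_faithful
  intro φ
  rw [c.UpMap_nabla]

end equivalences

section graded

omit c in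
lemma act_zero (Y : GrMod R P lP rP) (n : ℕ) (p : P n) : Y.act n p 0 = 0 := by
  have h := Y.act_addr n p 0 0
  rw [add_zero] at h
  have h2 : Y.act n p 0 + 0 = Y.act n p 0 + Y.act n p 0 := by rw [add_zero]; exact h
  exact (add_left_cancel h2).symm

/-- `act · m` as an additive map in `p`. -/
def actHom (Y : GrMod R P lP rP) (n : ℕ) (m : Y.M n) : P n →+ Y.M (n + 1) :=
  AddMonoidHom.mk' (fun p => Y.act n p m) (fun a b => Y.act_addl n a b m)

/-- The canonical map `Y_n → Down n Y_{n+1}`. -/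
def gdelta (Y : GrMod R P lP rP) (n : ℕ) : Y.M n →ₗ[R n] c.Down n (Y.M (n + 1)) where
  toFun m := ⟨actHom Y n m, fun r p => Y.act_l n r p m⟩
  map_add' m m' := Down.ext c fun p => Y.act_addr n p m m'
  map_smul' r m := Down.ext c fun p => by
    show Y.act n p (r • m) = Y.act n (rP n p r) m
    exact (Y.act_r n p r m).symm

@[simp] lemma gdelta_apply (Y : GrMod R P lP rP) (n : ℕ) (m : Y.M n) (p : P n) :
    (c.gdelta Y n m).1 p = Y.act n p m := rfl

lemma downEl_act (Y : GrMod R P lP rP) (n : ℕ) (q : c.Q n) (p : P n) (m : Y.M n) :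
    c.downEl q (Y.act n p m) = c.gdelta Y n (c.sig n q p • m) :=
  Down.ext c fun p' => by
    show c.tau n p' q • Y.act n p m = Y.act n p' (c.sig n q p • m)
    rw [← Y.act_l n (c.tau n p' q) p m, c.assocP, Y.act_r]

/-! ### The free graded module on a module in degree 0 -/

variable (V : Type) [AddCommGroup V] [Module (R 0) V]

def UpT : ∀ n : ℕ, ModuleCat (R n)
  | 0 => ModuleCat.of (R 0) V
  | n + 1 => ModuleCat.of (R (n + 1)) (c.Up n (UpT n))

/-- The free graded module `Φ V = ⊕ₙ R_{n0} ⊗ V`. -/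
def FMod : GrMod R P lP rP where
  M n := c.UpT V n
  acg n := inferInstance
  mod n := inferInstance
  act n p m := c.upEl p m
  act_addl n p p' m := c.upEl_addl p p' m
  act_addr n p m m' := c.upEl_addr p m m'
  act_l n r p m := c.upEl_smul_l r p m
  act_r n p r m := c.upEl_smul_r p r m

variable {V}

/-- The universal lift out of the free graded module. -/
def Flift (Y : GrMod R P lP rP) (g : V →ₗ[R 0] Y.M 0) :
    ∀ n, (c.FMod V).M n →ₗ[R n] Y.M n
  | 0 => g
  | n + 1 => ((c.coevIso (M := Y.M (n + 1))).symm.toLinearMap.comp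
      (c.UpMap ((c.gdelta Y n).comp (Flift Y g n))))

lemma Flift_compat (Y : GrMod R P lP rP) (g : V →ₗ[R 0] Y.M 0) (n : ℕ)
    (p : P n) (m : (c.FMod V).M n) :
    c.Flift Y g (n + 1) ((c.FMod V).act n p m) = Y.act n p (c.Flift Y g n m) := by
  simp only [Flift]
  show (c.coevIso (M := Y.M (n + 1))).symm
      (c.UpMap ((c.gdelta Y n).comp (c.Flift Y g n)) (c.upEl p m)) = _
  have h : c.UpMap ((c.gdelta Y n).comp (c.Flift Y g n)) (c.upEl p m)
      = c.coevIso (Y.act n p (c.Flift Y g n m)) := by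
    refine Up.ext c fun q => ?_
    rw [UpMap_apply, coevIso_apply]
    show c.gdelta Y n (c.Flift Y g n ((c.upEl (n := n) p m).1 q)) = _
    rw [upEl_apply, map_smul, ← c.downEl_act]
  rw [h, LinearEquiv.symm_apply_apply]

/-- The universal graded morphism out of the free graded module. -/
def FHom (Y : GrMod R P lP rP) (g : V →ₗ[R 0] Y.M 0) : GrHom R P lP rP (c.FMod V) Y :=
  ⟨c.Flift Y g, c.Flift_compat Y g⟩

lemma FHom_zero (Y : GrMod R P lP rP) (g : V →ₗ[R 0] Y.M 0) :
    (c.FHom Y g).f 0 = g := by simp [FHom, Flift]; rfl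

/-- Uniqueness: morphisms out of the free graded module are determined in degree 0. -/
lemma F_unique (Y : GrMod R P lP rP) (h h' : GrHom R P lP rP (c.FMod V) Y)
    (h0 : h.f 0 = h'.f 0) : ∀ n, h.f n = h'.f n := by
  intro n
  induction n with
  | zero => exact h0
  | succ n ih =>
      ext φ
      refine c.up_add_ext (A := c.UpT V n) (h.f (n + 1)).toAddMonoidHom
        ((h'.f (n + 1)).toAddMonoidHom) ?_ φ
      intro p a
      show h.f (n + 1) ((c.FMod V).act n p a) = h'.f (n + 1) ((c.FMod V).act n p a)
      exact (h.compat n p a).trans ((congrArg (Y.act n p) (LinearMap.congr_fun ih a)).trans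
        (h'.compat n p a).symm)

/-- Any graded morphism between free graded modules is `UpMap` of its lower level. -/
lemma F_level {W : Type} [AddCommGroup W] [Module (R 0) W]
    (G : GrHom R P lP rP (c.FMod V) (c.FMod W)) (n : ℕ) :
    G.f (n + 1) = c.UpMap (G.f n) := by
  ext φ
  refine c.up_add_ext (A := c.UpT V n) (G.f (n + 1)).toAddMonoidHom
    ((c.UpMap (G.f n)).toAddMonoidHom) ?_ φ
  intro p a
  show G.f (n + 1) ((c.FMod V).act n p a) = c.UpMap (G.f n) (c.upEl p a)
  exact (G.compat n p a).trans (c.UpMap_upEl (G.f n) p a).symm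

/-- The delta maps of the free graded module are bijective. -/
lemma gdelta_F_bij (n : ℕ) : Function.Bijective (c.gdelta (c.FMod V) n) := by
  have h : ∀ m : (c.FMod V).M n, c.gdelta (c.FMod V) n m
      = c.unitIso (A := c.UpT V n) m := fun m => Down.ext c fun p => rfl
  constructor
  · intro x y hxy
    exact (c.unitIso (A := c.UpT V n)).injective (by rw [← h x, ← h y, hxy])
  · intro ψ
    exact ⟨(c.unitIso (A := c.UpT V n)).symm ψ, (h _).trans ((c.unitIso (A := c.UpT V n)).apply_symm_apply ψ)⟩

/-! ### Ascending and descending module maps along the towers -/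

variable (V) (W : Type) [AddCommGroup W] [Module (R 0) W]

def ascend (f : V →ₗ[R 0] W) : ∀ n, (c.UpT V n : Type) →ₗ[R n] (c.UpT W n : Type)
  | 0 => f
  | n + 1 => c.UpMap (ascend f n)

def descend : ∀ n, ((c.UpT V n : Type) →ₗ[R n] (c.UpT W n : Type)) → (V →ₗ[R 0] W)
  | 0 => fun G => G
  | n + 1 => fun G => descend n (c.nabla G)

variable {V W}

lemma ascend_descend : ∀ n (G : (c.UpT V n : Type) →ₗ[R n] (c.UpT W n : Type)),
    c.ascend V W (c.descend V W n G) n = G := by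
  intro n
  induction n with
  | zero => intro G; rfl
  | succ n ih =>
      intro G
      simp only [ascend, descend]
      rw [ih]; exact c.UpMap_nabla G

lemma descend_ascend : ∀ n (f : V →ₗ[R 0] W), c.descend V W n (c.ascend V W f n) = f := by
  intro n
  induction n with
  | zero => intro f; rfl
  | succ n ih =>
      intro f
      simp only [ascend, descend]
      rw [c.nabla_UpMap, ih]

/-- The free graded module on a finitely generated module satisfies the
`IsFG` closure property. -/
lemma F_span (N : ∀ n, Submodule (R n) ((c.FMod V).M n))
    (hclosed : ∀ (n : ℕ) (p : P n) (m : (c.FMod V).M n),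
      m ∈ N n → (c.FMod V).act n p m ∈ N (n + 1))
    (h0 : ∀ v : (c.FMod V).M 0, v ∈ N 0) : ∀ n x, x ∈ N n := by
  intro n
  induction n with
  | zero => exact h0
  | succ n ih =>
      intro φ
      rw [← c.up_span (A := c.UpT V n) φ]
      refine list_sum_mem ?_
      intro y hy
      obtain ⟨z, hz, rfl⟩ := List.mem_map.mp hy
      exact hclosed n z.1 (φ.1 z.2) (ih _)

end graded

section towers

/-- The composite "down" functor from `R n`-modules to `R 0`-modules. -/
def DnT : ∀ n, ModuleCat (R n) → ModuleCat (R 0)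
  | 0, X => X
  | n + 1, X => DnT n (ModuleCat.of (R n) (c.Down n X))

def DnTmap : ∀ n {X Y : ModuleCat (R n)}, (X →ₗ[R n] Y) →
    ((c.DnT n X : Type) →ₗ[R 0] (c.DnT n Y : Type))
  | 0, _, _, f => f
  | n + 1, X, Y, f => DnTmap n (c.DownMap f)

lemma DnTmap_surj : ∀ n, ∀ {X Y : ModuleCat (R n)} (f : X →ₗ[R n] Y),
    Function.Surjective f → Function.Surjective (c.DnTmap n f) := by
  intro n
  induction n with
  | zero => intro X Y f hf; exact hf
  | succ n ih =>
      intro X Y f hf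
      simp only [DnTmap]
      exact ih _ (c.down_pres_surj f hf)

lemma DnTmap_reflect_inj : ∀ n, ∀ {X Y : ModuleCat (R n)} (f : X →ₗ[R n] Y),
    Function.Injective (c.DnTmap n f) → Function.Injective f := by
  intro n
  induction n with
  | zero => intro X Y f hf; exact hf
  | succ n ih =>
      intro X Y f hf
      simp only [DnTmap] at hf
      exact c.down_reflect_inj f (ih _ hf)

lemma DnT_fg : ∀ n (X : ModuleCat (R n)), Module.Finite (R n) X →
    Module.Finite (R 0) (c.DnT n X) := by
  intro n
  induction n with
  | zero => intro X hX; exact hX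
  | succ n ih =>
      intro X hX
      simp only [DnT]
      exact ih _ (c.down_pres_fg (M := X))

/-- Iso `UpT (DnT n X) n ≃ X` : going all the way down and back up. -/
def baseIso : ∀ n (X : ModuleCat (R n)), ((c.UpT (c.DnT n X) n : Type) ≃ₗ[R n] X)
  | 0, X => LinearEquiv.refl _ _
  | n + 1, X =>
      (c.UpEquiv (baseIso n (ModuleCat.of (R n) (c.Down n X)))).trans
        (c.coevIso (M := X)).symm

/-- Step-up isomorphism between graded modules with invertible delta. -/
def stepIso {Z Y : GrMod R P lP rP} (n : ℕ)
    (hZ : Function.Bijective (c.gdelta Z n)) (hY : Function.Bijective (c.gdelta Y n))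
    (u : Z.M n ≃ₗ[R n] Y.M n) : Z.M (n + 1) ≃ₗ[R (n + 1)] Y.M (n + 1) :=
  (c.coevIso (M := Z.M (n + 1))).trans
    ((c.UpEquiv (((LinearEquiv.ofBijective _ hZ).symm.trans u).trans
      (LinearEquiv.ofBijective _ hY))).trans (c.coevIso (M := Y.M (n + 1))).symm)

lemma stepIso_act {Z Y : GrMod R P lP rP} (n : ℕ)
    (hZ : Function.Bijective (c.gdelta Z n)) (hY : Function.Bijective (c.gdelta Y n))
    (u : Z.M n ≃ₗ[R n] Y.M n) (p : P n) (m : Z.M n) :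
    c.stepIso n hZ hY u (Z.act n p m) = Y.act n p (u m) := by
  show (c.coevIso (M := Y.M (n + 1))).symm
      ((c.UpEquiv (((LinearEquiv.ofBijective _ hZ).symm.trans u).trans
        (LinearEquiv.ofBijective _ hY))) (c.coevIso (Z.act n p m))) = _
  rw [LinearEquiv.symm_apply_eq]
  refine Up.ext c fun q => ?_
  rw [UpEquiv_apply, coevIso_apply, coevIso_apply]
  rw [c.downEl_act]
  have h1 : (LinearEquiv.ofBijective _ hZ).symm (c.gdelta Z n (c.sig n q p • m))
      = c.sig n q p • m := by
    rw [LinearEquiv.symm_apply_eq]; rfl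
  show (LinearEquiv.ofBijective _ hY)
      (u ((LinearEquiv.ofBijective _ hZ).symm (c.gdelta Z n (c.sig n q p • m)))) = _
  rw [h1]
  show c.gdelta Y n (u (c.sig n q p • m)) = _
  rw [map_smul, ← c.downEl_act]

end towers

section fgpieces

variable (Y : GrMod R P lP rP)

/-- Homogeneous components of a generating set. -/
def gensAt (gens : Finset (Σ n : ℕ, Y.M n)) (k : ℕ) : List (Y.M k) :=
  gens.toList.filterMap (fun g => if h : g.1 = k then some (h ▸ g.2) else none)

omit c in
lemma mem_gensAt (gens : Finset (Σ n : ℕ, Y.M n)) (g : Σ n : ℕ, Y.M n)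
    (hg : g ∈ gens) : g.2 ∈ gensAt Y gens g.1 := by
  obtain ⟨k, x⟩ := g
  rw [gensAt, List.mem_filterMap]
  exact ⟨⟨k, x⟩, Finset.mem_toList.mpr hg, by simp⟩

/-- A recursive list of module generators for the graded pieces. -/
def genList (gens : Finset (Σ n : ℕ, Y.M n)) : ∀ k, List (Y.M k)
  | 0 => gensAt Y gens 0
  | k + 1 => gensAt Y gens (k + 1) ++
      (((c.sdec k).product (genList gens k)).map fun zm => Y.act k zm.1.2 zm.2)

lemma genList_closed (gens : Finset (Σ n : ℕ, Y.M n)) (k : ℕ) (p : P k) (m : Y.M k)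
    (hm : m ∈ Submodule.span (R k) {x | x ∈ c.genList Y gens k}) :
    Y.act k p m ∈ Submodule.span (R (k + 1)) {x | x ∈ c.genList Y gens (k + 1)} := by
  refine Submodule.span_induction
    (p := fun x _ => ∀ p', Y.act k p' x ∈ Submodule.span (R (k + 1))
      {x | x ∈ c.genList Y gens (k + 1)}) ?_ ?_ ?_ ?_ hm p
  · intro x hx p'
    have hp : Y.act k p' x
        = (((c.sdec k).map fun z => lP k (c.tau k p' z.1) z.2).map (actHom Y k x)).sum := by
      conv_lhs => rw [← c.p_decomp p']
      exact map_list_sum (actHom Y k x) _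
    rw [hp]
    refine list_sum_mem ?_
    intro y hy
    simp only [List.map_map, List.mem_map, Function.comp_apply] at hy
    obtain ⟨z, hz, rfl⟩ := hy
    show Y.act k (lP k (c.tau k p' z.1) z.2) x ∈ _
    rw [Y.act_l]
    refine Submodule.smul_mem _ _ (Submodule.subset_span ?_)
    show Y.act k z.2 x ∈ c.genList Y gens (k + 1)
    simp only [genList, List.mem_append, List.mem_map]
    exact Or.inr ⟨(z, x), List.pair_mem_product.mpr ⟨hz, hx⟩, rfl⟩
  · intro p'
    rw [act_zero]
    exact Submodule.zero_mem _
  · intro x y _ _ ihx ihy p'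
    rw [Y.act_addr]
    exact Submodule.add_mem _ (ihx p') (ihy p')
  · intro r x _ ihx p'
    rw [← Y.act_r]
    exact ihx (rP k p' r)

end fgpieces

section fgpieces2

variable (Y : GrMod R P lP rP)

lemma genList_contains (gens : Finset (Σ n : ℕ, Y.M n)) (g : Σ n : ℕ, Y.M n)
    (hg : g ∈ gens) : g.2 ∈ c.genList Y gens g.1 := by
  have h := mem_gensAt Y gens g hg
  match g with
  | ⟨0, x⟩ => exact h
  | ⟨k + 1, x⟩ => simp only [genList, List.mem_append]; exact Or.inl h

/-- Each graded piece of a finitely generated graded module is finitely generated. -/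
lemma pieces_fg (hY : Y.IsFG R P lP rP) (n : ℕ) : Module.Finite (R n) (Y.M n) := by
  classical
  obtain ⟨gens, hgens⟩ := hY
  have htop := hgens (fun k => Submodule.span (R k) {x | x ∈ c.genList Y gens k})
    (fun k p m hm => c.genList_closed Y gens k p m hm)
    (fun g hg => Submodule.subset_span (c.genList_contains Y gens g hg))
  constructor
  rw [Submodule.fg_def]
  refine ⟨{x | x ∈ c.genList Y gens n}, List.finite_toSet _, ?_⟩
  rw [Submodule.eq_top_iff']
  exact htop n

/-- The span of the image of the action in degree `n + 1`. -/
def actSpan (n : ℕ) : Submodule (R (n + 1)) (Y.M (n + 1)) :=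
  Submodule.span (R (n + 1)) {x | ∃ p m, x = Y.act n p m}

omit c in
lemma act_actSpan (n : ℕ) (x : Y.M (n + 1)) (hx : x ∈ actSpan Y n) (p : P (n + 1)) :
    Y.act (n + 1) p x ∈ actSpan Y (n + 1) := by
  refine Submodule.span_induction
    (p := fun x _ => ∀ p', Y.act (n + 1) p' x ∈ actSpan Y (n + 1)) ?_ ?_ ?_ ?_ hx p
  · rintro x ⟨p'', m, rfl⟩ p'
    exact Submodule.subset_span ⟨p', _, rfl⟩
  · intro p'
    rw [act_zero]
    exact Submodule.zero_mem _
  · intro x y _ _ ihx ihy p'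
    rw [Y.act_addr]
    exact Submodule.add_mem _ (ihx p') (ihy p')
  · intro r x _ ihx p'
    rw [← Y.act_r]
    exact ihx (rP (n + 1) p' r)

omit c in
/-- In degrees above the generators, the graded module is spanned by the action. -/
lemma high_span (gens : Finset (Σ n : ℕ, Y.M n))
    (hgens : ∀ N : ∀ n, Submodule (R n) (Y.M n),
      (∀ (n : ℕ) (p : P n) (m : Y.M n), m ∈ N n → Y.act n p m ∈ N (n + 1)) →
      (∀ g ∈ gens, g.2 ∈ N g.1) → ∀ (n : ℕ) (x : Y.M n), x ∈ N n)
    (n : ℕ) (hn : gens.sup (fun g => g.1) ≤ n) (x : Y.M (n + 1)) :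
    x ∈ actSpan Y n := by
  have key := hgens (fun k => Nat.casesOn k ⊤ (fun j => if j + 1 ≤ n then ⊤ else actSpan Y j))
    ?_ ?_ (n + 1) x
  · simpa [Nat.not_succ_le_self n] using key
  · intro k p m hm
    show Y.act k p m ∈ (if k + 1 ≤ n then ⊤ else actSpan Y k : Submodule (R (k + 1)) _)
    by_cases hkn : k + 1 ≤ n
    · simp [hkn]
    · rw [if_neg hkn]
      cases k with
      | zero => exact Submodule.subset_span ⟨p, m, rfl⟩
      | succ j =>
          by_cases hj : j + 1 ≤ n
          · exact Submodule.subset_span ⟨p, m, rfl⟩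
          · have hm' : m ∈ actSpan Y j := by simpa [hj] using hm
            exact act_actSpan Y j m hm' p
  · intro g hg
    have hle : g.1 ≤ n := le_trans (Finset.le_sup hg) hn
    obtain ⟨k, x⟩ := g
    cases k with
    | zero => trivial
    | succ j =>
        have hle' : j + 1 ≤ n := hle
        simp [hle']

/-- If the degree `n + 1` piece is spanned by the action, `gdelta` is surjective. -/
lemma gdelta_surj (n : ℕ) (hsp : ∀ x : Y.M (n + 1), x ∈ actSpan Y n) :
    Function.Surjective (c.gdelta Y n) := by
  have key : ∀ x : Y.M (n + 1), x ∈ actSpan Y n →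
      ∀ q, c.downEl q x ∈ LinearMap.range (c.gdelta Y n) := by
    intro x hx
    refine Submodule.span_induction
      (p := fun x _ => ∀ q, c.downEl q x ∈ LinearMap.range (c.gdelta Y n)) ?_ ?_ ?_ ?_ hx
    · rintro x ⟨p, m, rfl⟩ q
      rw [c.downEl_act]
      exact LinearMap.mem_range_self _ _
    · intro q
      rw [downEl_zero]
      exact Submodule.zero_mem _
    · intro x y _ _ ihx ihy q
      rw [c.downEl_addr]
      exact Submodule.add_mem _ (ihx q) (ihy q)
    · intro r x _ ihx q
      rw [← c.downEl_smul_r]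
      exact ihx (c.rQ n q r)
  intro ψ
  have hmem : ψ ∈ LinearMap.range (c.gdelta Y n) := by
    rw [← c.down_span ψ]
    refine list_sum_mem ?_
    intro y hy
    simp only [List.mem_map] at hy
    obtain ⟨z, hz, rfl⟩ := hy
    exact key (ψ.1 z.2) (hsp _) z.1
  exact hmem

end fgpieces2

section compare

variable (Y : GrMod R P lP rP) (V₀ : Type) [AddCommGroup V₀] [Module (R 0) V₀]
  (η : V₀ →ₗ[R 0] Y.M 0)

/-- Comparison map from the free model. -/
def cmpA : GrHom R P lP rP (c.FMod V₀) Y := c.FHom Y η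

omit c in
/-- Abstract universal property of `(Y, η)`. -/
def IsUnivP : Prop :=
  ∀ (Z : GrMod R P lP rP) (g : V₀ →ₗ[R 0] Z.M 0),
    ∃! h : GrHom R P lP rP Y Z, ∀ v, h.f 0 (η v) = g v

variable (hu : IsUnivP Y V₀ η)

def cmpB : GrHom R P lP rP Y (c.FMod V₀) :=
  (hu (c.FMod V₀) (LinearMap.id (R := R 0) (M := V₀))).exists.choose

lemma cmpB0 (v : V₀) : (c.cmpB Y V₀ η hu).f 0 (η v) = v :=
  (hu (c.FMod V₀) (LinearMap.id (R := R 0) (M := V₀))).exists.choose_spec v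

lemma cmpA0 (v : V₀) : (c.cmpA Y V₀ η).f 0 v = η v :=
  LinearMap.congr_fun (c.FHom_zero Y η) v


lemma cmpBA (n : ℕ) (x : (c.FMod V₀).M n) :
    (c.cmpB Y V₀ η hu).f n ((c.cmpA Y V₀ η).f n x) = x := by
  have h0 : (grComp (c.cmpB Y V₀ η hu) (c.cmpA Y V₀ η)).f 0 = (grId (c.FMod V₀)).f 0 := by
    ext v
    show (c.cmpB Y V₀ η hu).f 0 ((c.cmpA Y V₀ η).f 0 v) = v
    exact (congrArg ((c.cmpB Y V₀ η hu).f 0) (c.cmpA0 Y V₀ η v)).trans (c.cmpB0 Y V₀ η hu v)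
  exact LinearMap.congr_fun
    (c.F_unique (c.FMod V₀) (grComp (c.cmpB Y V₀ η hu) (c.cmpA Y V₀ η))
      (grId (c.FMod V₀)) h0 n) x

lemma cmpAB (n : ℕ) (x : Y.M n) :
    (c.cmpA Y V₀ η).f n ((c.cmpB Y V₀ η hu).f n x) = x := by
  have h1 : grComp (c.cmpA Y V₀ η) (c.cmpB Y V₀ η hu) = grId Y := by
    refine (hu Y η).unique ?_ ?_
    · intro v
      show (c.cmpA Y V₀ η).f 0 ((c.cmpB Y V₀ η hu).f 0 (η v)) = η v
      rw [c.cmpB0, c.cmpA0]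
    · intro v; rfl
  exact LinearMap.congr_fun (congrArg (fun h => GrHom.f h n) h1) x

end compare


end MCtx

/-- let `R_ℤ` be the Morita ℤ-algebra associated to rings `R_n` and
progenerator bimodules `P_n` (encoded by a Morita context with surjective pairings),
with `R_0` noetherian.  Let `Φ : M ↦ ⊕_n R_{n0} ⊗_{R_0} M` be the induction functor,
characterized by the universal property of `⊕_n R_{n0} ⊗_{R_0} M` as the graded
module freely generated in degree `0` by `M` (via `η : M → Φ(M)_0`).  Then
`M ↦ π(Φ M)` is an equivalence from finitely generated `R_0`-modules to the quotient
category `R_ℤ`-qgr of noetherian graded `R_ℤ`-modules modulo bounded (torsion)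
modules: `Φ` sends finitely generated modules to finitely generated graded modules,
it is fully faithful up to torsion (each "tail" homomorphism `Φ V → Φ W`, defined in
degrees `≥ n₀`, agrees in all large degrees with `Φ f` for a unique
`f : V → W`), and it is essentially surjective up to torsion (every finitely
generated graded module is isomorphic to some `Φ V` in all large degrees). -/
theorem morita_Zalgebra_qgr_equivalence
    (lP_addl : ∀ n (r s : R (n + 1)) p, lP n (r + s) p = lP n r p + lP n s p)
    (lP_addr : ∀ n (r : R (n + 1)) (p q : P n), lP n r (p + q) = lP n r p + lP n r q)
    (lP_one : ∀ n p, lP n 1 p = p)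
    (lP_mul : ∀ n (r s : R (n + 1)) p, lP n (r * s) p = lP n r (lP n s p))
    (rP_addl : ∀ n (p q : P n) r, rP n (p + q) r = rP n p r + rP n q r)
    (rP_addr : ∀ n (p : P n) (r s : R n), rP n p (r + s) = rP n p r + rP n p s)
    (rP_one : ∀ n p, rP n p 1 = p)
    (rP_mul : ∀ n (p : P n) (r s : R n), rP n p (r * s) = rP n (rP n p r) s)
    (lrP : ∀ n (r : R (n + 1)) (p : P n) (s : R n),
      rP n (lP n r p) s = lP n r (rP n p s))
    (Q : ℕ → Type) [∀ n, AddCommGroup (Q n)]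
    (lQ : ∀ n, R n → Q n → Q n) (rQ : ∀ n, Q n → R (n + 1) → Q n)
    (lQ_addl : ∀ n (r s : R n) q, lQ n (r + s) q = lQ n r q + lQ n s q)
    (lQ_addr : ∀ n (r : R n) (q q' : Q n), lQ n r (q + q') = lQ n r q + lQ n r q')
    (lQ_one : ∀ n q, lQ n 1 q = q)
    (lQ_mul : ∀ n (r s : R n) q, lQ n (r * s) q = lQ n r (lQ n s q))
    (rQ_addl : ∀ n (q q' : Q n) r, rQ n (q + q') r = rQ n q r + rQ n q' r)
    (rQ_addr : ∀ n (q : Q n) (r s : R (n + 1)), rQ n q (r + s) = rQ n q r + rQ n q s)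
    (rQ_one : ∀ n q, rQ n q 1 = q)
    (rQ_mul : ∀ n (q : Q n) (r s : R (n + 1)), rQ n q (r * s) = rQ n (rQ n q r) s)
    (lrQ : ∀ n (r : R n) (q : Q n) (s : R (n + 1)),
      rQ n (lQ n r q) s = lQ n r (rQ n q s))
    (tau : ∀ n, P n → Q n → R (n + 1)) (sig : ∀ n, Q n → P n → R n)
    (tau_addl : ∀ n (p p' : P n) q, tau n (p + p') q = tau n p q + tau n p' q)
    (tau_addr : ∀ n (p : P n) (q q' : Q n), tau n p (q + q') = tau n p q + tau n p q')
    (sig_addl : ∀ n (q q' : Q n) p, sig n (q + q') p = sig n q p + sig n q' p)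
    (sig_addr : ∀ n (q : Q n) (p p' : P n), sig n q (p + p') = sig n q p + sig n q p')
    (tau_l : ∀ n (r : R (n + 1)) p q, tau n (lP n r p) q = r * tau n p q)
    (tau_mid : ∀ n (p : P n) (r : R n) q, tau n (rP n p r) q = tau n p (lQ n r q))
    (tau_r : ∀ n (p : P n) q (r : R (n + 1)), tau n p (rQ n q r) = tau n p q * r)
    (sig_l : ∀ n (r : R n) q p, sig n (lQ n r q) p = r * sig n q p)
    (sig_mid : ∀ n (q : Q n) (r : R (n + 1)) p, sig n (rQ n q r) p = sig n q (lP n r p))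
    (sig_r : ∀ n (q : Q n) p (r : R n), sig n q (rP n p r) = sig n q p * r)
    (assocP : ∀ n (p : P n) (q : Q n) (p' : P n),
      lP n (tau n p q) p' = rP n p (sig n q p'))
    (assocQ : ∀ n (q : Q n) (p : P n) (q' : Q n),
      lQ n (sig n q p) q' = rQ n q (tau n p q'))
    (tau_surj : ∀ n (r : R (n + 1)),
      r ∈ AddSubgroup.closure {x : R (n + 1) | ∃ p q, x = tau n p q})
    (sig_surj : ∀ n (r : R n),
      r ∈ AddSubgroup.closure {x : R n | ∃ q p, x = sig n q p})
    (hnoeth : IsNoetherianRing (R 0))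
    -- the induction functor `Φ(M) = ⊕_n R_{n0} ⊗_{R_0} M` and its unit `η`,
    -- given by the universal property of the graded module generated in degree 0
    (Phi : ModuleCat (R 0) → GrMod R P lP rP)
    (eta : ∀ V : ModuleCat (R 0), ↥V →ₗ[R 0] (Phi V).M 0)
    (huniv : ∀ (V : ModuleCat (R 0)) (Y : GrMod R P lP rP)
      (g : ↥V →ₗ[R 0] Y.M 0),
      ∃! h : GrHom R P lP rP (Phi V) Y, ∀ v : ↥V, h.f 0 (eta V v) = g v) :
    -- (a) Φ sends finitely generated modules to finitely generated graded modules
    (∀ V : ModuleCat (R 0), Module.Finite (R 0) ↥V → (Phi V).IsFG) ∧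
    -- (b) Φ is fully faithful up to torsion: tail homomorphisms `Φ V → Φ W`
    -- correspond bijectively to homomorphisms `V → W`
    (∀ V W : ModuleCat (R 0), Module.Finite (R 0) ↥V → Module.Finite (R 0) ↥W →
      ∀ (n₀ : ℕ) (g : ∀ n, n₀ ≤ n → ((Phi V).M n →ₗ[R n] (Phi W).M n)),
        (∀ (n : ℕ) (hn : n₀ ≤ n) (p : P n) (m : (Phi V).M n),
          g (n + 1) (hn.trans (Nat.le_succ n)) ((Phi V).act n p m) =
            (Phi W).act n p (g n hn m)) →
        ∃! f : ↥V →ₗ[R 0] ↥W,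
          ∀ h : GrHom R P lP rP (Phi V) (Phi W),
            (∀ v : ↥V, h.f 0 (eta V v) = eta W (f v)) →
            ∃ (n₁ : ℕ) (hle : n₀ ≤ n₁), ∀ (n : ℕ) (hn : n₁ ≤ n) (x : (Phi V).M n),
              h.f n x = g n (hle.trans hn) x) ∧
    -- (c) Φ is essentially surjective up to torsion
    (∀ Y : GrMod R P lP rP, Y.IsFG R P lP rP →
      ∃ V : ModuleCat (R 0), Module.Finite (R 0) ↥V ∧
        ∃ (n₀ : ℕ) (u : ∀ n, n₀ ≤ n → ((Phi V).M n ≃ₗ[R n] Y.M n)),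
          ∀ (n : ℕ) (hn : n₀ ≤ n) (p : P n) (m : (Phi V).M n),
            u (n + 1) (hn.trans (Nat.le_succ n)) ((Phi V).act n p m) =
              Y.act n p (u n hn m)) := by
  classical
  set c : MCtx R P lP rP :=
    ⟨Q, inferInstance, lQ, rQ, tau, sig, lP_addl, lP_addr, lP_one, lP_mul,
      rP_addl, rP_addr, rP_one, rP_mul, lrP, lQ_addl, lQ_addr, lQ_one, lQ_mul,
      rQ_addl, rQ_addr, rQ_one, rQ_mul, lrQ, tau_addl, tau_addr, sig_addl, sig_addr,
      tau_l, tau_mid, tau_r, sig_l, sig_mid, sig_r, assocP, assocQ,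
      tau_surj, sig_surj⟩ with hc
  have mkUniv : ∀ (V : ModuleCat (R 0)) (V₀ : Type) [AddCommGroup V₀] [Module (R 0) V₀]
      (e : V₀ ≃ₗ[R 0] ↥V),
      MCtx.IsUnivP (Phi V) V₀ ((eta V).comp e.toLinearMap) := by
    intro V V₀ _ _ e Z g
    obtain ⟨h, hspec, huniq⟩ := huniv V Z (g.comp e.symm.toLinearMap)
    refine ⟨h, ?_, ?_⟩
    · intro v₀
      show h.f 0 (eta V (e v₀)) = g v₀
      rw [hspec (e v₀)]
      show g (e.symm (e v₀)) = g v₀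
      rw [e.symm_apply_apply]
    · intro h' hh'
      apply huniq
      intro v
      have h2 := hh' (e.symm v)
      show h'.f 0 (eta V v) = g (e.symm v)
      have h3 : eta V (e (e.symm v)) = eta V v := by rw [e.apply_symm_apply]
      calc h'.f 0 (eta V v) = h'.f 0 (eta V (e (e.symm v))) := by rw [h3]
        _ = g (e.symm v) := h2
  have smallRep : ∀ (V : ModuleCat (R 0)), Module.Finite (R 0) ↥V →
      ∃ (V₀ : Type) (_ : AddCommGroup V₀) (_ : Module (R 0) V₀),
        Nonempty (V₀ ≃ₗ[R 0] ↥V) := by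
    intro V hV
    obtain ⟨k, φ, hφ⟩ := Module.Finite.exists_fin' (R 0) ↥V
    exact ⟨_, _, _, ⟨φ.quotKerEquivOfSurjective hφ⟩⟩
  refine ⟨?_, ?_, ?_⟩
  · -- (a)
    intro V hV
    obtain ⟨V₀, iV1, iV2, ⟨eV⟩⟩ := smallRep V hV
    have huV := mkUniv V V₀ eV
    set ηV : V₀ →ₗ[R 0] (Phi V).M 0 := (eta V).comp eV.toLinearMap with hηV
    obtain ⟨T, hT⟩ := Module.Finite.fg_top (R := R 0) (M := ↥V)
    refine ⟨T.image (fun v => ⟨0, eta V v⟩), ?_⟩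
    intro N hclosed hgens
    have hv' : ∀ v : ↥V, eta V v ∈ N 0 := by
      intro v
      have hvmem : v ∈ Submodule.span (R 0) (T : Set ↥V) := by rw [hT]; trivial
      refine Submodule.span_induction (p := fun v _ => eta V v ∈ N 0) ?_ ?_ ?_ ?_ hvmem
      · intro v hvT
        exact hgens ⟨0, eta V v⟩ (Finset.mem_image.mpr ⟨v, hvT, rfl⟩)
      · show eta V 0 ∈ N 0
        rw [map_zero]; exact Submodule.zero_mem _
      · intro x y _ _ hx hy
        show eta V (x + y) ∈ N 0
        rw [map_add]; exact Submodule.add_mem _ hx hy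
      · intro r x _ hx
        show eta V (r • x) ∈ N 0
        rw [map_smul]; exact Submodule.smul_mem _ _ hx
    have hall := c.F_span (V := V₀)
      (fun n => (N n).comap ((c.cmpA (Phi V) V₀ ηV).f n)) ?_ ?_
    · intro n x
      have hm : (c.cmpA (Phi V) V₀ ηV).f n
          ((c.cmpB (Phi V) V₀ ηV huV).f n x) ∈ N n :=
        hall n ((c.cmpB (Phi V) V₀ ηV huV).f n x)
      rwa [c.cmpAB (Phi V) V₀ ηV huV n x] at hm
    · intro n p m hm
      show (c.cmpA (Phi V) V₀ ηV).f (n + 1) ((c.FMod V₀).act n p m) ∈ N (n + 1)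
      rw [(c.cmpA (Phi V) V₀ ηV).compat]
      exact hclosed n p _ hm
    · intro v
      show (c.cmpA (Phi V) V₀ ηV).f 0 v ∈ N 0
      exact (congrArg (· ∈ N 0) (c.cmpA0 (Phi V) V₀ ηV v)).mpr (hv' (eV v))
  · -- (b)
    intro V W hVf hWf n₀ g hg
    obtain ⟨V₀, iV1, iV2, ⟨eV⟩⟩ := smallRep V hVf
    obtain ⟨W₀, iW1, iW2, ⟨eW⟩⟩ := smallRep W hWf
    have huV := mkUniv V V₀ eV
    have huW := mkUniv W W₀ eW
    set ηV : V₀ →ₗ[R 0] (Phi V).M 0 := (eta V).comp eV.toLinearMap with hηV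
    set ηW : W₀ →ₗ[R 0] (Phi W).M 0 := (eta W).comp eW.toLinearMap with hηW
    set αV := c.cmpA (Phi V) V₀ ηV with hαV
    set βV := c.cmpB (Phi V) V₀ ηV huV with hβV
    set αW := c.cmpA (Phi W) W₀ ηW with hαW
    set βW := c.cmpB (Phi W) W₀ ηW huW with hβW
    have hβeta : ∀ x : ↥W, βW.f 0 (eta W x) = eW.symm x := by
      intro x
      have h1 := c.cmpB0 (Phi W) W₀ ηW huW (eW.symm x)
      have h2 : ηW (eW.symm x) = eta W x := by
        show eta W (eW (eW.symm x)) = eta W x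
        rw [eW.apply_symm_apply]
      rwa [h2] at h1
    set g' : ∀ n, n₀ ≤ n → ((c.FMod V₀).M n →ₗ[R n] (c.FMod W₀).M n) :=
      fun n hn => (βW.f n).comp ((g n hn).comp (αV.f n)) with hg'
    set f0 : V₀ →ₗ[R 0] W₀ := c.descend V₀ W₀ n₀ (g' n₀ le_rfl) with hf0
    set f : ↥V →ₗ[R 0] ↥W := (eW.toLinearMap.comp f0).comp eV.symm.toLinearMap with hf
    have hff : ((eW.symm.toLinearMap.comp f).comp eV.toLinearMap : V₀ →ₗ[R 0] W₀) = f0 := by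
      ext v₀
      show eW.symm (f (eV v₀)) = f0 v₀
      rw [hf]
      show eW.symm (eW (f0 (eV.symm (eV v₀)))) = f0 v₀
      rw [eV.symm_apply_apply, eW.symm_apply_apply]
    have hkey : ∀ (n : ℕ) (hn : n₀ ≤ n), g' n hn = c.ascend V₀ W₀ f0 n := by
      intro n hn
      induction n, hn using Nat.le_induction with
      | base => exact (c.ascend_descend n₀ _).symm
      | succ n hn ih =>
          have hstep : g' (n + 1) (Nat.le_succ_of_le hn) = c.UpMap (g' n hn) := by
            ext φ
            refine c.up_add_ext (A := c.UpT V₀ n)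
              (g' (n + 1) (Nat.le_succ_of_le hn)).toAddMonoidHom
              (c.UpMap (g' n hn)).toAddMonoidHom ?_ φ
            intro p a
            show βW.f (n + 1) (g (n + 1) _ (αV.f (n + 1) ((c.FMod V₀).act n p a)))
              = c.UpMap (g' n hn) (c.upEl p a)
            exact (congrArg (fun x => βW.f (n + 1) (g (n + 1) (Nat.le_succ_of_le hn) x))
              (αV.compat n p a)).trans ((congrArg (βW.f (n + 1)) (hg n hn p _)).trans
              ((βW.compat n p _).trans (c.UpMap_upEl (g' n hn) p a).symm))
          rw [hstep, ih]
          rfl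
    have hlevel : ∀ (h : GrHom R P lP rP (Phi V) (Phi W)) (f1 : ↥V →ₗ[R 0] ↥W),
        (∀ v : ↥V, h.f 0 (eta V v) = eta W (f1 v)) →
        ∀ n, (grComp βW (grComp h αV)).f n
          = c.ascend V₀ W₀ ((eW.symm.toLinearMap.comp f1).comp eV.toLinearMap) n := by
      intro h f1 hpre n
      induction n with
      | zero =>
          ext v₀
          show βW.f 0 (h.f 0 (αV.f 0 v₀)) = eW.symm (f1 (eV v₀))
          exact (congrArg (fun x => βW.f 0 (h.f 0 x)) (c.cmpA0 (Phi V) V₀ ηV v₀)).trans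
            ((congrArg (βW.f 0) (hpre (eV v₀))).trans (hβeta _))
      | succ n ih =>
          rw [c.F_level (grComp βW (grComp h αV)) n, ih]
          rfl
    refine ⟨f, ?_, ?_⟩
    · intro h hpre
      refine ⟨n₀, le_rfl, ?_⟩
      intro n hn x
      have hlev := hlevel h f hpre n
      rw [hff] at hlev
      have hx : h.f n x = αW.f n ((grComp βW (grComp h αV)).f n (βV.f n x)) := by
        show h.f n x = αW.f n (βW.f n (h.f n (αV.f n (βV.f n x))))
        rw [c.cmpAB (Phi V) V₀ ηV huV n x, c.cmpAB (Phi W) W₀ ηW huW n (h.f n x)]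
      rw [hx, hlev, ← hkey n hn]
      show αW.f n (βW.f n (g n hn (αV.f n (βV.f n x)))) = _
      rw [c.cmpAB (Phi V) V₀ ηV huV n x, c.cmpAB (Phi W) W₀ ηW huW n (g n hn x)]
    · intro y hy
      obtain ⟨hhom, hspec⟩ := (huniv V (Phi W) ((eta W).comp y)).exists
      obtain ⟨n₁, hle₁, hagree⟩ := hy hhom (fun v => hspec v)
      set n2 := max n₁ n₀ with hn2
      have e1 : (grComp βW (grComp hhom αV)).f n2 = g' n2 (le_max_right n₁ n₀) := by
        ext x
        show βW.f n2 (hhom.f n2 (αV.f n2 x)) = βW.f n2 (g n2 _ (αV.f n2 x))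
        rw [hagree n2 (le_max_left n₁ n₀) (αV.f n2 x)]
      have e2 : c.ascend V₀ W₀ ((eW.symm.toLinearMap.comp y).comp eV.toLinearMap) n2
          = c.ascend V₀ W₀ f0 n2 := by
        rw [← hlevel hhom y (fun v => hspec v) n2, e1, hkey n2 (le_max_right n₁ n₀)]
      have e3 := congrArg (c.descend V₀ W₀ n2) e2
      rw [c.descend_ascend, c.descend_ascend] at e3
      ext x
      have e4 := LinearMap.congr_fun e3 (eV.symm x)
      have e5 : eW.symm (y (eV (eV.symm x))) = f0 (eV.symm x) := e4
      rw [eV.apply_symm_apply] at e5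
      show y x = eW (f0 (eV.symm x))
      rw [← e5, eW.apply_symm_apply]
  · -- (c)
    intro Y hY
    obtain ⟨gens, hgens⟩ := hY
    set n₀ := gens.sup (fun g => g.1) with hn₀
    have hpfg : ∀ n, Module.Finite (R n) (Y.M n) := c.pieces_fg Y ⟨gens, hgens⟩
    have hsurj : ∀ n, n₀ ≤ n → Function.Surjective (c.gdelta Y n) :=
      fun n hn => c.gdelta_surj Y n (fun x => MCtx.high_span Y gens hgens n hn x)
    set Vn : ℕ → ModuleCat (R 0) := fun n => c.DnT n (ModuleCat.of (R n) (Y.M n)) with hVn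
    set s : ∀ n, (Vn n : Type) →ₗ[R 0] (Vn (n + 1) : Type) :=
      fun n => c.DnTmap n (X := ModuleCat.of (R n) (Y.M n))
        (Y := ModuleCat.of (R n) (c.Down n (Y.M (n + 1)))) (c.gdelta Y n) with hs
    set πc : ∀ k, (Vn n₀ : Type) →ₗ[R 0] (Vn (n₀ + k) : Type) :=
      fun k => Nat.rec LinearMap.id (fun k ih => (s (n₀ + k)).comp ih) k with hπc
    have hπsurj : ∀ k, Function.Surjective (πc k) := by
      intro k
      induction k with
      | zero => exact fun x => ⟨x, rfl⟩
      | succ k ih =>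
          have hsk : Function.Surjective (s (n₀ + k)) :=
            c.DnTmap_surj (n₀ + k) (X := ModuleCat.of (R (n₀ + k)) (Y.M (n₀ + k)))
              (Y := ModuleCat.of (R (n₀ + k)) (c.Down (n₀ + k) (Y.M (n₀ + k + 1))))
              (c.gdelta Y (n₀ + k))
              (hsurj (n₀ + k) (Nat.le_add_right n₀ k))
          have hcomp : Function.Surjective (⇑(s (n₀ + k)) ∘ ⇑(πc k)) := hsk.comp ih
          show Function.Surjective ((s (n₀ + k)).comp (πc k))
          rwa [LinearMap.coe_comp]
    letI := hnoeth
    letI : Module.Finite (R 0) (Vn n₀ : Type) :=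
      c.DnT_fg n₀ (ModuleCat.of (R n₀) (Y.M n₀)) (hpfg n₀)
    have hnoe : IsNoetherian (R 0) (Vn n₀ : Type) :=
      isNoetherian_of_isNoetherianRing_of_finite (R 0) _
    obtain ⟨k₀, hk₀⟩ := (monotone_stabilizes_iff_noetherian.mpr hnoe)
      ⟨fun k => LinearMap.ker (πc k), by
        refine monotone_nat_of_le_succ ?_
        intro k x hx
        show ((s (n₀ + k)).comp (πc k)) x = 0
        rw [LinearMap.comp_apply, show πc k x = 0 from hx, map_zero]⟩
    have hsinj : ∀ k, k₀ ≤ k → Function.Injective (s (n₀ + k)) := by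
      intro k hk
      rw [injective_iff_map_eq_zero]
      intro x hx
      obtain ⟨w, rfl⟩ := hπsurj k x
      have hw : πc (k + 1) w = 0 := by
        show ((s (n₀ + k)).comp (πc k)) w = 0
        rw [LinearMap.comp_apply, hx]
      have hkk := (hk₀ (k + 1) (le_trans hk (Nat.le_succ k))).symm.trans (hk₀ k hk)
      have hw' : w ∈ LinearMap.ker (πc (k + 1)) := hw
      have : w ∈ LinearMap.ker (πc k) := by
        have := congrArg (fun (N : Submodule (R 0) (Vn n₀ : Type)) => w ∈ N) hkk
        simp only [eq_iff_iff] at this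
        exact this.mp hw'
      exact this
    set n₁ := n₀ + k₀ with hn₁
    have hdbij : ∀ n, n₁ ≤ n → Function.Bijective (c.gdelta Y n) := by
      intro n hn
      constructor
      · have hkeq : n₀ + (n - n₀) = n := by omega
        have hinj := hsinj (n - n₀) (by omega)
        rw [hkeq] at hinj
        exact c.DnTmap_reflect_inj n _ hinj
      · exact hsurj n (by omega)
    set M₀ : Type := (c.DnT n₁ (ModuleCat.of (R n₁) (Y.M n₁)) : Type) with hM₀
    haveI : Module.Finite (R 0) M₀ :=
      c.DnT_fg n₁ (ModuleCat.of (R n₁) (Y.M n₁)) (hpfg n₁)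
    set V : ModuleCat (R 0) := ModuleCat.of (R 0) (ULift M₀) with hV
    have eV : M₀ ≃ₗ[R 0] ↥V := ULift.moduleEquiv.symm
    have huV := mkUniv V M₀ eV
    set ηV : M₀ →ₗ[R 0] (Phi V).M 0 := (eta V).comp eV.toLinearMap with hηV
    refine ⟨V, Module.Finite.equiv eV, n₁, ?_, ?_⟩
    case _ =>
      exact fun n hn =>
        (LinearEquiv.symm
          { (c.cmpA (Phi V) M₀ ηV).f n with
            invFun := (c.cmpB (Phi V) M₀ ηV huV).f n
            left_inv := fun x => c.cmpBA (Phi V) M₀ ηV huV n x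
            right_inv := fun x => c.cmpAB (Phi V) M₀ ηV huV n x }).trans
        (towerRec n₁ (c.baseIso n₁ (ModuleCat.of (R n₁) (Y.M n₁)))
          (fun n hn u => c.stepIso n (c.gdelta_F_bij n) (hdbij n hn) u) n hn)
    case _ =>
      intro n hn p m
      show towerRec n₁ (c.baseIso n₁ (ModuleCat.of (R n₁) (Y.M n₁)))
          (fun n hn u => c.stepIso n (c.gdelta_F_bij n) (hdbij n hn) u) (n + 1)
          (hn.trans (Nat.le_succ n))
          ((c.cmpB (Phi V) M₀ ηV huV).f (n + 1) ((Phi V).act n p m)) = _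
      rw [(c.cmpB (Phi V) M₀ ηV huV).compat]
      refine (DFunLike.congr_fun (towerRec_succ
        (T := fun k => (c.FMod M₀).M k ≃ₗ[R k] Y.M k) n₁ _ _ n hn _) _).trans ?_
      exact c.stepIso_act n _ _ _ p ((c.cmpB (Phi V) M₀ ηV huV).f n m)

end
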